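/- arXiv:0807.3298 — 3 statements merged into one kernel-verified Lean document; each statement's English description precedes it below -/
import Mathlib

section
/- Let ν be a non-atomic Borel probability measure on the circle 𝕋¹ = ℝ/ℤ, and let f : 𝕋¹ → 𝕋¹ be a homeomorphism that preserves ν. Then there exist a point x ∈ 𝕋¹ and a radius sequence r : ℕ → ℝ_{≥0} such that ∑_{n=0}^∞ ν(B(x, r(n))) = ∞ and yet ν( ⋂_{N ∈ ℕ} ⋃_{n ≥ N} (fⁿ)⁻¹( B(x, r(n)) ) ) = 0. In particular, the dynamical system (𝕋¹, ν, ℕ, f) does not have the shrinking target property. -/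
open MeasureTheory Metric

namespace STPAux

lemma coe_add (s t : ℝ) : ((s + t : ℝ) : UnitAddCircle) = (s : UnitAddCircle) + (t : UnitAddCircle) := rfl
lemma coe_sub (s t : ℝ) : ((s - t : ℝ) : UnitAddCircle) = (s : UnitAddCircle) - (t : UnitAddCircle) := rfl

/-- Every element of the circle has a representative with `|t| = ‖z‖`. -/
lemma exists_rep (z : UnitAddCircle) : ∃ t : ℝ, (t : UnitAddCircle) = z ∧ |t| = ‖z‖ := by
  induction z using QuotientAddGroup.induction_on with
  | H t₀ =>
    refine ⟨t₀ - round t₀, ?_, by rw [UnitAddCircle.norm_eq]⟩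
    have h0 : ((round t₀ : ℝ) : UnitAddCircle) = 0 := by
      rw [AddCircle.coe_eq_zero_iff]
      exact ⟨round t₀, by simp⟩
    rw [coe_sub, h0, sub_zero]

lemma norm_le_half (z : UnitAddCircle) : ‖z‖ ≤ 1/2 := by
  induction z using QuotientAddGroup.induction_on with
  | H t₀ => rw [UnitAddCircle.norm_eq]; exact abs_sub_round t₀

lemma norm_coe_le (t : ℝ) : ‖(t : UnitAddCircle)‖ ≤ |t| := by
  rw [UnitAddCircle.norm_eq]
  rcases le_or_gt (1/2) (|t|) with h | h
  · exact le_trans (abs_sub_round t) h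
  · have : round t = 0 := by
      rw [round_eq_zero_iff]
      constructor <;> [linarith [abs_lt.1 h]; linarith [abs_lt.1 h]]
    simp [this]

lemma dist_add_coe (x : UnitAddCircle) (s t : ℝ) :
    dist (x + (s : UnitAddCircle)) (x + (t : UnitAddCircle)) ≤ |s - t| := by
  rw [dist_eq_norm]
  have h : (x + (s : UnitAddCircle)) - (x + (t : UnitAddCircle)) = ((s - t : ℝ) : UnitAddCircle) := by
    rw [coe_sub]; abel
  rw [h]
  exact norm_coe_le _

lemma mem_ball_iff (x : UnitAddCircle) (c ρ : ℝ) (y : UnitAddCircle) :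
    y ∈ ball (x + (c : UnitAddCircle)) ρ ↔ ∃ t : ℝ, |t - c| < ρ ∧ y = x + (t : UnitAddCircle) := by
  constructor
  · intro hy
    rw [mem_ball, dist_eq_norm] at hy
    obtain ⟨w, hw, habs⟩ := exists_rep (y - (x + (c : UnitAddCircle)))
    have hwρ : |w| < ρ := by rw [habs]; exact hy
    refine ⟨c + w, by simpa using hwρ, ?_⟩
    rw [coe_add]
    have h2 : y = (x + (c : UnitAddCircle)) + (w : UnitAddCircle) := by
      rw [hw]; abel
    rw [h2]; abel
  · rintro ⟨t, ht, rfl⟩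
    rw [mem_ball]
    exact lt_of_le_of_lt (dist_add_coe x t c) ht

end STPAux

namespace STPAux2
open STPAux

lemma mem_sphere_cases {x : UnitAddCircle} {c ρ : ℝ} {y : UnitAddCircle}
    (hy : dist y (x + (c : UnitAddCircle)) = ρ) :
    y = x + ((c + ρ : ℝ) : UnitAddCircle) ∨ y = x + ((c - ρ : ℝ) : UnitAddCircle) := by
  obtain ⟨w, hw, habs⟩ := exists_rep (y - (x + (c : UnitAddCircle)))
  rw [dist_eq_norm] at hy
  have hwρ : |w| = ρ := by rw [habs, hy]
  have hρ0 : 0 ≤ ρ := hy ▸ norm_nonneg _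
  have h2 : y = (x + (c : UnitAddCircle)) + (w : UnitAddCircle) := by rw [hw]; abel
  rcases (abs_eq hρ0).mp hwρ with h | h
  · left; rw [h2, h, coe_add]; abel
  · right; rw [h2, h, coe_sub]
    have h3 : ((-ρ : ℝ) : UnitAddCircle) = -(ρ : UnitAddCircle) := by
      rw [show (-ρ : ℝ) = 0 - ρ by ring, coe_sub]; simp
    rw [h3]; abel

lemma ball_eq_image (x : UnitAddCircle) (c ρ : ℝ) :
    ball (x + (c : UnitAddCircle)) ρ
      = (fun t : ℝ => x + (t : UnitAddCircle)) '' Set.Ioo (c - ρ) (c + ρ) := by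
  ext y
  rw [mem_ball_iff]
  constructor
  · rintro ⟨t, ht, rfl⟩
    have h1 := (abs_lt.1 ht).1
    have h2 := (abs_lt.1 ht).2
    exact ⟨t, ⟨by linarith, by linarith⟩, rfl⟩
  · rintro ⟨t, ht, rfl⟩
    exact ⟨t, abs_lt.2 ⟨by linarith [ht.1], by linarith [ht.2]⟩, rfl⟩

lemma isPreconnected_ball (z : UnitAddCircle) (ρ : ℝ) : IsPreconnected (ball z ρ) := by
  have hz : z = z + ((0 : ℝ) : UnitAddCircle) := by simp
  rw [hz, ball_eq_image]
  have hc : Continuous fun t : ℝ => z + (t : UnitAddCircle) :=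
    continuous_const.add (AddCircle.continuous_mk' 1)
  exact (isPreconnected_Ioo).image _ hc.continuousOn

/-- The key arc lemma. -/
lemma arc_lemma (x : UnitAddCircle) (δ η₀ : ℝ) (hδ : 0 < δ) (hδη : δ < η₀) (hη : η₀ < 1/2)
    (S : Set UnitAddCircle) (hS : IsPreconnected S)
    {a b : UnitAddCircle} (ha : a ∈ S) (hb : b ∈ S)
    (had : dist a x < δ) (hbd : η₀ ≤ dist b x) :
    ball (x + (((δ + η₀)/2 : ℝ) : UnitAddCircle)) ((η₀ - δ)/2) ⊆ S ∨
      ball (x + ((-(δ + η₀)/2 : ℝ) : UnitAddCircle)) ((η₀ - δ)/2) ⊆ S := by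
  by_contra hcon
  push_neg at hcon
  obtain ⟨p, hpB, hpS⟩ := Set.not_subset.mp hcon.1
  obtain ⟨q, hqB, hqS⟩ := Set.not_subset.mp hcon.2
  obtain ⟨s, hs, rfl⟩ := (mem_ball_iff _ _ _ _).mp hpB
  obtain ⟨t, ht, rfl⟩ := (mem_ball_iff _ _ _ _).mp hqB
  have hs1 : δ < s := by have := abs_lt.1 hs; linarith [this.1]
  have hs2 : s < η₀ := by have := abs_lt.1 hs; linarith [this.2]
  have ht1 : -η₀ < t := by have := abs_lt.1 ht; linarith [this.1]
  have ht2 : t < -δ := by have := abs_lt.1 ht; linarith [this.2]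
  set u : ℝ := -t with hu
  have hu1 : δ < u := by rw [hu]; linarith
  have hu2 : u < η₀ := by rw [hu]; linarith
  set c₀ : ℝ := (s - u)/2 with hc₀
  set ρ : ℝ := (s + u)/2 with hρ
  have hρpos : 0 < ρ := by rw [hρ]; linarith
  have hρhalf : ρ < 1/2 := by rw [hρ]; linarith
  have habsc : |c₀| ≤ ρ - δ := by
    rw [hc₀]
    rw [abs_le]
    constructor
    · rw [hρ]; linarith
    · rw [hρ]; linarith
  set U : Set UnitAddCircle := ball (x + (c₀ : UnitAddCircle)) ρ with hU
  set V : Set UnitAddCircle := (closedBall (x + (c₀ : UnitAddCircle)) ρ)ᶜ with hV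
  have hUo : IsOpen U := isOpen_ball
  have hVo : IsOpen V := Metric.isClosed_closedBall.isOpen_compl
  have hdisj : Disjoint U V := by
    rw [Set.disjoint_compl_right_iff_subset]
    exact ball_subset_closedBall
  have hdxc : dist x (x + (c₀ : UnitAddCircle)) ≤ |c₀| := by
    have h := dist_add_coe x 0 c₀
    simpa using h
  have haU : a ∈ U := by
    rw [hU, mem_ball]
    calc dist a (x + (c₀ : UnitAddCircle)) ≤ dist a x + dist x (x + (c₀ : UnitAddCircle)) :=
          dist_triangle _ _ _
      _ < δ + |c₀| := by linarith
      _ ≤ ρ := by linarith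
  have hbV : b ∈ V := by
    rw [hV, Set.mem_compl_iff, mem_closedBall]
    intro hcontra
    have hxb : dist b x ≤ ρ + |c₀| := by
      calc dist b x ≤ dist b (x + (c₀ : UnitAddCircle)) + dist (x + (c₀ : UnitAddCircle)) x :=
            dist_triangle _ _ _
        _ ≤ ρ + |c₀| := by rw [dist_comm (x + (c₀ : UnitAddCircle)) x]; linarith
    have hmax : ρ + |c₀| < η₀ := by
      rcases abs_cases c₀ with ⟨h1, _⟩ | ⟨h1, _⟩ <;> rw [h1] <;> rw [hρ, hc₀] <;> linarith
    linarith
  have hSUV : S ⊆ U ∪ V := by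
    intro y hy
    by_cases hyc : y ∈ closedBall (x + (c₀ : UnitAddCircle)) ρ
    · rcases lt_or_eq_of_le (mem_closedBall.mp hyc) with hlt | heq
      · exact Or.inl hlt
      · exfalso
        rcases mem_sphere_cases heq with h | h
        · apply hpS
          have : c₀ + ρ = s := by rw [hc₀, hρ]; ring
          rw [this] at h
          rw [← h]; exact hy
        · apply hqS
          have : c₀ - ρ = t := by rw [hc₀, hρ, hu]; ring
          rw [this] at h
          rw [← h]; exact hy
    · exact Or.inr hyc
  rcases hS.subset_or_subset hUo hVo hdisj hSUV with h | h
  · exact absurd (h hb) (by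
      intro hbU
      exact (Set.disjoint_left.mp hdisj hbU) hbV)
  · exact absurd (h ha) (by
      intro haV
      exact (Set.disjoint_left.mp hdisj haU) haV)

end STPAux2

namespace STPAux3
open STPAux STPAux2

variable {ν : MeasureTheory.Measure UnitAddCircle} [IsProbabilityMeasure ν]
variable {f : UnitAddCircle ≃ₜ UnitAddCircle}

lemma preimage_iterate_eq_image (f : UnitAddCircle ≃ₜ UnitAddCircle) (n : ℕ)
    (A : Set UnitAddCircle) : (⇑f)^[n] ⁻¹' A = (⇑f.symm)^[n] '' A := by
  have hLI : Function.LeftInverse ⇑f ⇑f.symm := f.apply_symm_apply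
  have hRI : Function.LeftInverse ⇑f.symm ⇑f := f.symm_apply_apply
  ext y
  simp only [Set.mem_preimage, Set.mem_image]
  constructor
  · intro h
    exact ⟨(⇑f)^[n] y, h, hRI.iterate n _⟩
  · rintro ⟨a, ha, rfl⟩
    rw [hLI.iterate n a]
    exact ha

lemma per_time (hf : MeasurePreserving f ν ν) (hna : ∀ x : UnitAddCircle, ν {x} = 0)
    (x : UnitAddCircle) (δ η₀ η : ℝ) (hδ0 : 0 < δ) (hδη₀ : δ < η₀) (hη₀η : η₀ < η)
    (hη₀half : η₀ < 1/2) {c : ENNReal}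
    (hcP : c ≤ ν (ball (x + (((δ + η₀)/2 : ℝ) : UnitAddCircle)) ((η₀ - δ)/2)))
    (hcM : c ≤ ν (ball (x + ((-(δ + η₀)/2 : ℝ) : UnitAddCircle)) ((η₀ - δ)/2)))
    (hc0 : c ≠ 0) (hc1 : c ≤ 1)
    (n : ℕ) (hn : dist ((⇑f.symm)^[n] x) x < δ) :
    ∃ r : ℝ, 0 < r ∧ r ≤ 1/2 ∧ ((⇑f)^[n] ⁻¹' ball x r ⊆ ball x η) ∧ c/2 ≤ ν (ball x r) := by
  classical
  set g : UnitAddCircle → UnitAddCircle := ⇑f.symm with hg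
  have hgc : Continuous (g^[n]) := (f.symm.continuous).iterate n
  set T : Set ℝ := {r : ℝ | 0 < r ∧ r ≤ 1/2 ∧ (⇑f)^[n] ⁻¹' ball x r ⊆ ball x η} with hT
  -- T is nonempty
  have hTne : T.Nonempty := by
    have hca : ContinuousAt (g^[n]) x := hgc.continuousAt
    rw [Metric.continuousAt_iff] at hca
    obtain ⟨ε₀, hε₀, hεball⟩ := hca (η - δ) (by linarith)
    refine ⟨min ε₀ (1/2), lt_min hε₀ (by norm_num), min_le_right _ _, ?_⟩
    intro y hy
    rw [Set.mem_preimage] at hy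
    have h1 : dist ((⇑f)^[n] y) x < ε₀ := lt_of_lt_of_le (mem_ball.mp hy) (min_le_left _ _)
    have h2 := hεball h1
    have h3 : g^[n] ((⇑f)^[n] y) = y :=
      (show Function.LeftInverse g ⇑f from f.symm_apply_apply).iterate n y
    rw [h3] at h2
    rw [mem_ball]
    calc dist y x ≤ dist y (g^[n] x) + dist (g^[n] x) x := dist_triangle _ _ _
      _ < (η - δ) + δ := by exact add_lt_add h2 hn
      _ = η := by ring
  have hTbdd : BddAbove T := ⟨1/2, fun r hr => hr.2.1⟩
  set ρ : ℝ := sSup T with hρdef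
  have hρpos : 0 < ρ := lt_of_lt_of_le hTne.choose_spec.1 (le_csSup hTbdd hTne.choose_spec)
  have hρhalf : ρ ≤ 1/2 := csSup_le hTne fun r hr => hr.2.1
  have hx0 : x = x + ((0 : ℝ) : UnitAddCircle) := by simp
  -- main claim: c ≤ ν (ball x ρ)
  have hmain : c ≤ ν (ball x ρ) := by
    rcases eq_or_lt_of_le hρhalf with hρeq | hρlt
    · -- ρ = 1/2 : the ball has full measure
      have hfull : (Set.univ : Set UnitAddCircle)
          ⊆ ball x ρ ∪ {x + ((1/2 : ℝ) : UnitAddCircle)} := by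
        intro y _
        by_cases hy : y ∈ ball x ρ
        · exact Or.inl hy
        · right
          have hle : dist y x ≤ 1/2 := by
            rw [dist_eq_norm]; exact norm_le_half _
          have heq : dist y (x + ((0 : ℝ) : UnitAddCircle)) = 1/2 := by
            rw [← hx0]
            rw [mem_ball] at hy
            push_neg at hy
            rw [hρeq] at hy
            linarith
          rcases mem_sphere_cases heq with h | h
          · rw [h]
            simp only [Set.mem_singleton_iff]
            norm_num
          · rw [h]
            simp only [Set.mem_singleton_iff]
            have hcoe : ((0 - 1/2 : ℝ) : UnitAddCircle) = ((1/2 : ℝ) : UnitAddCircle) := by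
              have : ((1/2 : ℝ) : UnitAddCircle) - ((0 - 1/2 : ℝ) : UnitAddCircle)
                  = ((1 : ℝ) : UnitAddCircle) := by
                rw [← coe_sub]; norm_num
              have h1 : ((1 : ℝ) : UnitAddCircle) = 0 := by
                rw [AddCircle.coe_eq_zero_iff]
                exact ⟨1, by simp⟩
              have h2 := this.trans h1
              rw [sub_eq_zero] at h2
              exact h2.symm
            rw [hcoe]
      have h1 : (1 : ENNReal) ≤ ν (ball x ρ) := by
        have := measure_mono (μ := ν) hfull
        rw [measure_univ] at this
        calc (1 : ENNReal) ≤ ν (ball x ρ ∪ {x + ((1/2 : ℝ) : UnitAddCircle)}) := this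
          _ ≤ ν (ball x ρ) + ν {x + ((1/2 : ℝ) : UnitAddCircle)} := measure_union_le _ _
          _ = ν (ball x ρ) := by rw [hna]; ring
      exact le_trans hc1 h1
    · -- ρ < 1/2
      have key : ∀ r' : ℝ, ρ < r' → r' ≤ 1/2 → c ≤ ν (ball x r') := by
        intro r' hρr' hr'half
        have hr'T : r' ∉ T := notMem_of_csSup_lt hρr' hTbdd
        have hncont : ¬ ((⇑f)^[n] ⁻¹' ball x r' ⊆ ball x η) := by
          intro hcont
          exact hr'T ⟨lt_trans hρpos hρr', hr'half, hcont⟩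
        obtain ⟨b, hbS, hbout⟩ := Set.not_subset.mp hncont
        set S : Set UnitAddCircle := (⇑f)^[n] ⁻¹' ball x r' with hS
        have hSpre : IsPreconnected S := by
          rw [hS, preimage_iterate_eq_image]
          exact (isPreconnected_ball x r').image _ ((f.symm.continuous).iterate n).continuousOn
        have haS : g^[n] x ∈ S := by
          rw [hS, Set.mem_preimage]
          have hh : (⇑f)^[n] (g^[n] x) = x :=
            (show Function.LeftInverse ⇑f g from f.apply_symm_apply).iterate n x
          rw [hh]
          exact mem_ball_self (lt_trans hρpos hρr')
        have hbd : η₀ ≤ dist b x := by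
          rw [mem_ball] at hbout
          push_neg at hbout
          linarith
        have harc := arc_lemma x δ η₀ hδ0 hδη₀ hη₀half S hSpre haS hbS hn hbd
        have hcS : c ≤ ν S := by
          rcases harc with h | h
          · exact le_trans hcP (measure_mono h)
          · exact le_trans hcM (measure_mono h)
        have hmeas : ν S = ν (ball x r') :=
          (hf.iterate n).measure_preimage measurableSet_ball.nullMeasurableSet
        rwa [hmeas] at hcS
      -- continuity from above to closedBall
      set q : ℕ → ℝ := fun m => ρ + (1/2 - ρ)/(m+1) with hq
      have hqρ : ∀ m, ρ < q m := by
        intro m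
        have : (0:ℝ) < (1/2 - ρ)/(m+1) := div_pos (by linarith) (by positivity)
        simp only [hq]; linarith
      have hqhalf : ∀ m, q m ≤ 1/2 := by
        intro m
        have h1 : ((1:ℝ) ≤ m + 1) := by exact_mod_cast Nat.succ_le_succ (Nat.zero_le m)
        have h2 : (1/2 - ρ)/(m+1) ≤ (1/2 - ρ) := by
          apply div_le_self (by linarith) h1
        simp only [hq]; linarith
      have hcball : closedBall x ρ = ⋂ m : ℕ, ball x (q m) := by
        ext y
        simp only [mem_closedBall, Set.mem_iInter, mem_ball]
        constructor
        · intro h m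
          exact lt_of_le_of_lt h (hqρ m)
        · intro h
          by_contra hgt
          push_neg at hgt
          obtain ⟨m, hm⟩ := exists_nat_gt ((1/2 - ρ)/(dist y x - ρ))
          have hd : 0 < dist y x - ρ := by linarith
          have h2 : (1/2 - ρ)/(dist y x - ρ) < m + 1 := by linarith
          have h3 : (1/2 - ρ) < (m+1) * (dist y x - ρ) := by
            rw [div_lt_iff₀ hd] at h2
            linarith [h2]
          have h4 : (1/2 - ρ)/(m+1) < dist y x - ρ := by
            rw [div_lt_iff₀ (by positivity : (0:ℝ) < (m:ℝ)+1)]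
            linarith [h3]
          have := h m
          simp only [hq] at this
          linarith
      have hccball : c ≤ ν (closedBall x ρ) := by
        rw [hcball]
        have hanti : Antitone (fun m : ℕ => ball x (q m)) := by
          intro m m' hmm'
          apply ball_subset_ball
          have h1 : (m:ℝ) + 1 ≤ (m':ℝ) + 1 := by exact_mod_cast Nat.succ_le_succ hmm'
          have : (1/2 - ρ)/(m'+1) ≤ (1/2 - ρ)/(m+1) := by
            apply div_le_div_of_nonneg_left (by linarith) (by positivity) h1
          simp only [hq]; linarith
        rw [Directed.measure_iInter (fun m => measurableSet_ball.nullMeasurableSet)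
          hanti.directed_ge ⟨0, measure_ne_top ν _⟩]
        exact le_iInf fun m => key (q m) (hqρ m) (hqhalf m)
      -- remove the sphere
      have hsub : closedBall x ρ ⊆ ball x ρ ∪ ({x + ((0 + ρ : ℝ) : UnitAddCircle)}
          ∪ {x + ((0 - ρ : ℝ) : UnitAddCircle)}) := by
        intro y hy
        rcases lt_or_eq_of_le (mem_closedBall.mp hy) with h | h
        · exact Or.inl h
        · right
          have heq : dist y (x + ((0 : ℝ) : UnitAddCircle)) = ρ := by rw [← hx0]; exact h
          rcases mem_sphere_cases heq with h2 | h2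
          · exact Or.inl (by rw [h2]; rfl)
          · exact Or.inr (by rw [h2]; rfl)
      calc c ≤ ν (closedBall x ρ) := hccball
        _ ≤ ν (ball x ρ ∪ ({x + ((0 + ρ : ℝ) : UnitAddCircle)}
              ∪ {x + ((0 - ρ : ℝ) : UnitAddCircle)})) := measure_mono hsub
        _ ≤ ν (ball x ρ) + ν ({x + ((0 + ρ : ℝ) : UnitAddCircle)}
              ∪ {x + ((0 - ρ : ℝ) : UnitAddCircle)}) := measure_union_le _ _
        _ ≤ ν (ball x ρ) + (ν {x + ((0 + ρ : ℝ) : UnitAddCircle)}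
              + ν {x + ((0 - ρ : ℝ) : UnitAddCircle)}) := by
            gcongr
            exact measure_union_le _ _
        _ = ν (ball x ρ) := by rw [hna, hna]; ring
  -- continuity from below: find r < ρ
  set sm : ℕ → ℝ := fun m => ρ - ρ/(m+2) with hsm
  have hsmpos : ∀ m, 0 < sm m := by
    intro m
    have h1 : ρ/(m+2) < ρ := by
      apply div_lt_self hρpos
      have : (1:ℝ) ≤ (m:ℝ) + 1 := by exact_mod_cast Nat.succ_le_succ (Nat.zero_le m)
      linarith
    simp only [hsm]; linarith
  have hsmlt : ∀ m, sm m < ρ := by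
    intro m
    have : (0:ℝ) < ρ/(m+2) := by positivity
    simp only [hsm]; linarith
  have hball : ball x ρ = ⋃ m : ℕ, ball x (sm m) := by
    ext y
    simp only [mem_ball, Set.mem_iUnion]
    constructor
    · intro h
      obtain ⟨m, hm⟩ := exists_nat_gt (ρ/(ρ - dist y x))
      refine ⟨m, ?_⟩
      have hd : 0 < ρ - dist y x := by linarith
      have h2 : ρ/(ρ - dist y x) < m + 2 := by linarith
      have h3 : ρ < (m+2) * (ρ - dist y x) := by
        rw [div_lt_iff₀ hd] at h2
        linarith
      have h4 : ρ/(m+2) < ρ - dist y x := by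
        rw [div_lt_iff₀ (by positivity : (0:ℝ) < (m:ℝ)+2)]
        linarith
      simp only [hsm]; linarith
    · rintro ⟨m, hm⟩
      exact lt_trans hm (hsmlt m)
  have hsup : ν (ball x ρ) = ⨆ m, ν (ball x (sm m)) := by
    rw [hball]
    apply Directed.measure_iUnion
    intro m m'
    rcases le_total (sm m) (sm m') with h | h
    · exact ⟨m', ball_subset_ball h, subset_rfl⟩
    · exact ⟨m, subset_rfl, ball_subset_ball h⟩
  have hctop : c ≠ ⊤ := ne_top_of_le_ne_top (by norm_num) hc1
  have hhalf : c/2 < c := ENNReal.half_lt_self hc0 hctop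
  have hlt : c/2 < ⨆ m, ν (ball x (sm m)) := by
    rw [← hsup]
    exact lt_of_lt_of_le hhalf hmain
  obtain ⟨m, hm⟩ := lt_iSup_iff.mp hlt
  refine ⟨sm m, hsmpos m, le_trans (hsmlt m).le hρhalf, ?_, hm.le⟩
  obtain ⟨r'', hr''T, hsmr''⟩ := exists_lt_of_lt_csSup hTne (hsmlt m)
  intro y hy
  exact hr''T.2.2 (Set.mem_preimage.mpr (ball_subset_ball hsmr''.le (Set.mem_preimage.mp hy)))

end STPAux3

namespace STPAux4
open STPAux STPAux2

lemma null_nonsupport (ν : MeasureTheory.Measure UnitAddCircle) :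
    ν {x : UnitAddCircle | ∃ ε > 0, ν (ball x ε) = 0} = 0 := by
  obtain ⟨D, hDc, hDd⟩ := TopologicalSpace.exists_countable_dense UnitAddCircle
  set J : Set (UnitAddCircle × ℚ) :=
    {p | p.1 ∈ D ∧ 0 < ((p.2 : ℝ)) ∧ ν (ball p.1 (p.2 : ℝ)) = 0} with hJ
  have hJc : J.Countable := by
    have : J ⊆ D ×ˢ (Set.univ : Set ℚ) := fun p hp => ⟨hp.1, Set.mem_univ _⟩
    exact (hDc.prod Set.countable_univ).mono this
  have hcover : {x : UnitAddCircle | ∃ ε > 0, ν (ball x ε) = 0}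
      ⊆ ⋃ p ∈ J, ball p.1 (p.2 : ℝ) := by
    rintro x ⟨ε, hε, hνε⟩
    obtain ⟨d, hdD, hdball⟩ := hDd.exists_mem_open isOpen_ball
      ⟨x, mem_ball_self (by linarith : (0:ℝ) < ε/3)⟩
    obtain ⟨q, hq1, hq2⟩ := exists_rat_btwn (show (ε/3 : ℝ) < ε/2 by linarith)
    have hdx : dist d x < ε/3 := mem_ball.mp hdball
    have hsub : ball d (q : ℝ) ⊆ ball x ε := by
      intro z hz
      rw [mem_ball] at hz ⊢
      calc dist z x ≤ dist z d + dist d x := dist_triangle _ _ _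
        _ < (q : ℝ) + ε/3 := by linarith
        _ ≤ ε := by linarith
    have hpJ : (d, q) ∈ J := ⟨hdD, by linarith, measure_mono_null hsub hνε⟩
    exact Set.mem_biUnion hpJ (mem_ball.mpr (by rw [dist_comm]; linarith))
  refine measure_mono_null hcover ?_
  rw [measure_biUnion_null_iff hJc]
  exact fun p hp => hp.2.2

lemma null_bad_side (ν : MeasureTheory.Measure UnitAddCircle) [IsProbabilityMeasure ν]
    (hna : ∀ x : UnitAddCircle, ν {x} = 0) (σ : ℝ) (hσ : σ = 1 ∨ σ = -1) :
    ν {x : UnitAddCircle | ∃ ε, 0 < ε ∧ ε ≤ 1/2 ∧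
      ν (ball (x + ((σ * ε/2 : ℝ) : UnitAddCircle)) (ε/2)) = 0} = 0 := by
  haveI : MeasureTheory.NoAtoms ν := ⟨hna⟩
  obtain ⟨D, hDc, hDd⟩ := TopologicalSpace.exists_countable_dense UnitAddCircle
  set K : Set UnitAddCircle := {x | ∀ ε > 0, ν (ball x ε) ≠ 0} with hK
  have hKnull : ν Kᶜ = 0 := by
    have : Kᶜ = {x : UnitAddCircle | ∃ ε > 0, ν (ball x ε) = 0} := by
      ext x
      simp only [hK, Set.mem_compl_iff, Set.mem_setOf_eq]
      push_neg
      rfl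
    rw [this]
    exact null_nonsupport ν
  set A : ℚ → Set UnitAddCircle := fun q =>
    {x | ν (ball (x + ((σ * (q:ℝ)/2 : ℝ) : UnitAddCircle)) ((q:ℝ)/2)) = 0} with hA
  have hσsq : σ * σ = 1 := by rcases hσ with h | h <;> rw [h] <;> norm_num
  have hσabs : |σ| = 1 := by rcases hσ with h | h <;> rw [h] <;> norm_num
  -- each A q ∩ K is q-separated, hence countable, hence null
  have hAnull : ∀ q : ℚ, 0 < (q:ℝ) → ν (A q ∩ K) = 0 := by
    intro q hq
    -- separation
    have hsep : ∀ x ∈ A q ∩ K, ∀ x' ∈ A q ∩ K, x ≠ x' → (q:ℝ) ≤ dist x x' := by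
      intro x hx x' hx' hne
      by_contra hlt
      push_neg at hlt
      obtain ⟨w, hw, habs⟩ := exists_rep (x' - x)
      have hwne : w ≠ 0 := by
        intro h0
        apply hne
        have : x' - x = 0 := by rw [← hw, h0]; simp
        rw [sub_eq_zero] at this
        exact this.symm
      have hwq : |w| < (q:ℝ) := by
        rw [habs, ← dist_eq_norm]
        rw [dist_comm x x'] at hlt
        exact hlt
      have hx'eq : x' = x + (w : UnitAddCircle) := by
        rw [hw]; abel
      -- the open null arcs
      have harc : ∀ z z' : UnitAddCircle, z ∈ A q ∩ K → z' ∈ K →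
          ∀ v : ℝ, 0 < σ * v → |v| < (q:ℝ) → z' = z + (v : UnitAddCircle) → False := by
        intro z z' hz hz' v hv hvq hzz'
        have hmem : z' ∈ ball (z + ((σ * (q:ℝ)/2 : ℝ) : UnitAddCircle)) ((q:ℝ)/2) := by
          rw [hzz']
          apply (mem_ball_iff z (σ * (q:ℝ)/2) ((q:ℝ)/2) _).mpr
          refine ⟨v, ?_, rfl⟩
          have h1 : |v - σ * (q:ℝ)/2| = |σ| * |v - σ * (q:ℝ)/2| := by rw [hσabs]; ring
          rw [h1, ← abs_mul]
          have h2 : σ * (v - σ * (q:ℝ)/2) = σ * v - (q:ℝ)/2 := by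
            rw [mul_sub]
            congr 1
            rw [show σ * (σ * (q:ℝ)/2) = (σ * σ) * ((q:ℝ)/2) by ring, hσsq]
            ring
          rw [h2, abs_lt]
          have hσv : σ * v < (q:ℝ) := by
            calc σ * v ≤ |σ * v| := le_abs_self _
              _ = |v| := by rw [abs_mul, hσabs, one_mul]
              _ < (q:ℝ) := hvq
          constructor <;> [linarith; linarith]
        obtain ⟨ς, hςpos, hςsub⟩ := Metric.mem_nhds_iff.mp (isOpen_ball.mem_nhds hmem)
        exact hz' ς hςpos (measure_mono_null hςsub hz.1)
      rcases lt_trichotomy (σ * w) 0 with h | h | h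
      · -- use x = x' + (-w)
        have : x = x' + ((-w : ℝ) : UnitAddCircle) := by
          rw [hx'eq]
          have : ((-w : ℝ) : UnitAddCircle) = -(w : UnitAddCircle) := by
            rw [show (-w : ℝ) = 0 - w by ring, coe_sub]; simp
          rw [this]; abel
        exact harc x' x hx' hx.2 (-w) (by nlinarith) (by rwa [abs_neg]) this
      · refine absurd ?_ hwne
        rcases hσ with h1 | h1 <;> rw [h1] at h <;> linarith
      · exact harc x x' hx hx'.2 w h hwq hx'eq
    -- separated implies countable
    have hcount : (A q ∩ K).Countable := by
      have hchoice : ∀ x : UnitAddCircle, ∃ d, d ∈ D ∧ d ∈ ball x ((q:ℝ)/4) := by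
        intro x
        obtain ⟨d, hdD, hdball⟩ := hDd.exists_mem_open isOpen_ball
          ⟨x, mem_ball_self (by linarith : (0:ℝ) < (q:ℝ)/4)⟩
        exact ⟨d, hdD, hdball⟩
      classical
      choose dfun hdD hdball using hchoice
      have hmaps : Set.MapsTo dfun (A q ∩ K) D := fun x _ => hdD x
      have hinj : Set.InjOn dfun (A q ∩ K) := by
        intro x hx x' hx' heq
        by_contra hne
        have h1 : dist x x' < (q:ℝ) := by
          have d1 : dist (dfun x) x < (q:ℝ)/4 := mem_ball.mp (hdball x)
          have d2 : dist (dfun x') x' < (q:ℝ)/4 := mem_ball.mp (hdball x')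
          calc dist x x' ≤ dist x (dfun x) + dist (dfun x) x' := dist_triangle _ _ _
            _ = dist (dfun x) x + dist (dfun x') x' := by rw [dist_comm x (dfun x), heq, dist_comm (dfun x') x']
            _ < (q:ℝ) := by linarith
        exact absurd h1 (not_lt.mpr (hsep x hx x' hx' hne))
      exact hmaps.countable_of_injOn hinj hDc
    haveI : NullSingletonClass ν := ⟨hna⟩
    exact hcount.measure_zero ν
  -- covering
  have hcover : {x : UnitAddCircle | ∃ ε, 0 < ε ∧ ε ≤ 1/2 ∧
      ν (ball (x + ((σ * ε/2 : ℝ) : UnitAddCircle)) (ε/2)) = 0}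
      ⊆ Kᶜ ∪ ⋃ q ∈ {q : ℚ | 0 < (q:ℝ) ∧ (q:ℝ) ≤ 1/2}, (A q ∩ K) := by
    rintro x ⟨ε, hε0, hεhalf, hεnull⟩
    by_cases hxK : x ∈ K
    · right
      obtain ⟨q, hq1, hq2⟩ := exists_rat_btwn (show (ε/2 : ℝ) < ε by linarith)
      have hsub : ball (x + ((σ * (q:ℝ)/2 : ℝ) : UnitAddCircle)) ((q:ℝ)/2)
          ⊆ ball (x + ((σ * ε/2 : ℝ) : UnitAddCircle)) (ε/2) := by
        intro y hy
        obtain ⟨t, ht, rfl⟩ := (mem_ball_iff _ _ _ _).mp hy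
        apply (mem_ball_iff _ _ _ _).mpr
        refine ⟨t, ?_, rfl⟩
        have h1 : |t - σ * (q:ℝ)/2| = |σ * t - (q:ℝ)/2| := by
          rw [show σ * t - (q:ℝ)/2 = σ * (t - σ * (q:ℝ)/2) by nlinarith [hσsq],
            abs_mul, hσabs, one_mul]
        have h2 : |t - σ * ε/2| = |σ * t - ε/2| := by
          rw [show σ * t - ε/2 = σ * (t - σ * ε/2) by nlinarith [hσsq],
            abs_mul, hσabs, one_mul]
        rw [h1, abs_lt] at ht
        rw [h2, abs_lt]
        constructor <;> [linarith; linarith]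
      exact Set.mem_biUnion ⟨by linarith, by linarith⟩
        ⟨measure_mono_null hsub hεnull, hxK⟩
    · exact Or.inl hxK
  refine measure_mono_null hcover (measure_union_null hKnull ?_)
  rw [measure_biUnion_null_iff (Set.countable_univ.mono (Set.subset_univ _))]
  exact fun q hq => hAnull q hq.1

end STPAux4

namespace STPAux5
open STPAux STPAux2 STPAux3 STPAux4 Filter

variable {ν : MeasureTheory.Measure UnitAddCircle} [IsProbabilityMeasure ν]
variable {f : UnitAddCircle ≃ₜ UnitAddCircle}

lemma exists_good_point (hf : MeasurePreserving f ν ν)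
    (hna : ∀ x : UnitAddCircle, ν {x} = 0) :
    ∃ x : UnitAddCircle,
      (∀ ε > 0, ∀ N : ℕ, ∃ n ≥ N, dist ((⇑f.symm)^[n] x) x < ε) ∧
      (∀ ε : ℝ, 0 < ε → ε ≤ 1/2 →
        ν (ball (x + ((1 * ε/2 : ℝ) : UnitAddCircle)) (ε/2)) ≠ 0 ∧
        ν (ball (x + ((-1 * ε/2 : ℝ) : UnitAddCircle)) (ε/2)) ≠ 0) := by
  haveI : (MeasureTheory.ae ν).NeBot :=
    MeasureTheory.ae_neBot.mpr (MeasureTheory.IsProbabilityMeasure.ne_zero ν)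
  have hgmp : MeasurePreserving (⇑f.symm) ν ν := hf.symm f.toMeasurableEquiv
  have hcons : MeasureTheory.Conservative (⇑f.symm) ν := hgmp.conservative
  have h1 := hcons.ae_frequently_mem_of_mem_nhds
  have h2 : ∀ᵐ x ∂ν, x ∉ {x : UnitAddCircle | ∃ ε, 0 < ε ∧ ε ≤ 1/2 ∧
      ν (ball (x + (((1:ℝ) * ε/2 : ℝ) : UnitAddCircle)) (ε/2)) = 0} :=
    compl_mem_ae_iff.mpr (null_bad_side ν hna 1 (Or.inl rfl))
  have h3 : ∀ᵐ x ∂ν, x ∉ {x : UnitAddCircle | ∃ ε, 0 < ε ∧ ε ≤ 1/2 ∧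
      ν (ball (x + (((-1:ℝ) * ε/2 : ℝ) : UnitAddCircle)) (ε/2)) = 0} :=
    compl_mem_ae_iff.mpr (null_bad_side ν hna (-1) (Or.inr rfl))
  obtain ⟨x, hx1, hx2, hx3⟩ := (h1.and (h2.and h3)).exists
  refine ⟨x, ?_, ?_⟩
  · intro ε hε N
    have hfreq := hx1 (ball x ε) (ball_mem_nhds x hε)
    obtain ⟨n, hn, hmem⟩ := (frequently_atTop.mp hfreq) N
    exact ⟨n, hn, mem_ball.mp hmem⟩
  · intro ε hε0 hεhalf
    constructor
    · intro h
      exact hx2 ⟨ε, hε0, hεhalf, h⟩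
    · intro h
      exact hx3 ⟨ε, hε0, hεhalf, h⟩

lemma level_params (x : UnitAddCircle)
    (hP : ∀ ε : ℝ, 0 < ε → ε ≤ 1/2 →
        ν (ball (x + ((1 * ε/2 : ℝ) : UnitAddCircle)) (ε/2)) ≠ 0 ∧
        ν (ball (x + ((-1 * ε/2 : ℝ) : UnitAddCircle)) (ε/2)) ≠ 0)
    (η₀ : ℝ) (hη₀ : 0 < η₀) (hη₀half : η₀ ≤ 1/2) :
    ∃ δ : ℝ, 0 < δ ∧ δ < η₀ ∧
      ν (ball (x + (((δ + η₀)/2 : ℝ) : UnitAddCircle)) ((η₀ - δ)/2)) ≠ 0 ∧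
      ν (ball (x + ((-(δ + η₀)/2 : ℝ) : UnitAddCircle)) ((η₀ - δ)/2)) ≠ 0 := by
  have hPs := (hP η₀ hη₀ hη₀half).1
  have hMs := (hP η₀ hη₀ hη₀half).2
  set δm : ℕ → ℝ := fun m => η₀/(m+2) with hδm
  have hδmpos : ∀ m, 0 < δm m := fun m => div_pos hη₀ (by positivity)
  have hδmlt : ∀ m, δm m < η₀ := by
    intro m
    rw [hδm]
    apply div_lt_self hη₀
    have : (1:ℝ) ≤ (m:ℝ) + 1 := by exact_mod_cast Nat.succ_le_succ (Nat.zero_le m)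
    linarith
  -- plus side cover
  have hcov : ∀ σ : ℝ, σ = 1 ∨ σ = -1 →
      ball (x + ((σ * η₀/2 : ℝ) : UnitAddCircle)) (η₀/2) ⊆
        ⋃ m : ℕ, ball (x + ((σ * (δm m + η₀)/2 : ℝ) : UnitAddCircle)) ((η₀ - δm m)/2) := by
    intro σ hσ y hy
    have hσsq : σ * σ = 1 := by rcases hσ with h | h <;> rw [h] <;> norm_num
    have hσabs : |σ| = 1 := by rcases hσ with h | h <;> rw [h] <;> norm_num
    obtain ⟨t, ht, rfl⟩ := (mem_ball_iff _ _ _ _).mp hy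
    have ht' : |σ * t - η₀/2| < η₀/2 := by
      rw [show σ * t - η₀/2 = σ * (t - σ * η₀/2) by rcases hσ with h | h <;> rw [h] <;> ring,
        abs_mul, hσabs, one_mul]
      exact ht
    have htpos : 0 < σ * t := by have := abs_lt.1 ht'; linarith [this.1]
    have htlt : σ * t < η₀ := by have := abs_lt.1 ht'; linarith [this.2]
    obtain ⟨m, hm⟩ := exists_nat_gt (η₀/(σ * t))
    refine Set.mem_iUnion.mpr ⟨m, ?_⟩
    apply (mem_ball_iff _ _ _ _).mpr
    refine ⟨t, ?_, rfl⟩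
    have hδmt : δm m < σ * t := by
      rw [hδm]
      rw [div_lt_iff₀ (by positivity : (0:ℝ) < (m:ℝ)+2)]
      rw [div_lt_iff₀ htpos] at hm
      nlinarith
    rw [show t - σ * (δm m + η₀)/2 = σ * (σ * t - (δm m + η₀)/2) by
        rcases hσ with h | h <;> rw [h] <;> ring,
      abs_mul, hσabs, one_mul, abs_lt]
    constructor
    · linarith
    · linarith [hδmpos m]
  have hex : ∀ σ : ℝ, σ = 1 ∨ σ = -1 →
      ν (ball (x + ((σ * η₀/2 : ℝ) : UnitAddCircle)) (η₀/2)) ≠ 0 →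
      ∃ m : ℕ, ν (ball (x + ((σ * (δm m + η₀)/2 : ℝ) : UnitAddCircle)) ((η₀ - δm m)/2)) ≠ 0 := by
    intro σ hσ hpos
    by_contra hall
    push_neg at hall
    exact hpos (measure_mono_null (hcov σ hσ) (measure_iUnion_null hall))
  obtain ⟨mP, hmP⟩ := hex 1 (Or.inl rfl) hPs
  obtain ⟨mM, hmM⟩ := hex (-1) (Or.inr rfl) hMs
  set m : ℕ := max mP mM with hm
  refine ⟨δm m, hδmpos m, hδmlt m, ?_, ?_⟩
  · -- monotone: arc with δm m contains arc with δm mP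
    intro h0
    apply hmP
    apply measure_mono_null ?_ h0
    intro y hy
    obtain ⟨t, ht, rfl⟩ := (mem_ball_iff _ _ _ _).mp hy
    apply (mem_ball_iff _ _ _ _).mpr
    refine ⟨t, ?_, rfl⟩
    have hmm : δm m ≤ δm mP := by
      rw [hδm]
      apply div_le_div_of_nonneg_left hη₀.le (by positivity)
      have : (mP:ℝ) ≤ (m:ℝ) := by exact_mod_cast le_max_left mP mM
      linarith
    rw [abs_lt] at ht ⊢
    constructor
    · linarith [ht.1]
    · linarith [ht.2]
  · intro h0
    apply hmM
    apply measure_mono_null ?_ h0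
    intro y hy
    obtain ⟨t, ht, rfl⟩ := (mem_ball_iff _ _ _ _).mp hy
    apply (mem_ball_iff _ _ _ _).mpr
    refine ⟨t, ?_, rfl⟩
    have hmm : δm m ≤ δm mM := by
      rw [hδm]
      apply div_le_div_of_nonneg_left hη₀.le (by positivity)
      have : (mM:ℝ) ≤ (m:ℝ) := by exact_mod_cast le_max_right mP mM
      linarith
    have h1 : (-1 : ℝ) * (δm mM + η₀)/2 = -(δm mM + η₀)/2 := by ring
    have h2 : (-1 : ℝ) * (δm m + η₀)/2 = -(δm m + η₀)/2 := by ring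
    rw [abs_lt] at ht ⊢
    constructor
    · linarith [ht.1]
    · linarith [ht.2]

end STPAux5

namespace STPAux6
open STPAux STPAux2 STPAux3 STPAux4 STPAux5 Filter

variable {ν : MeasureTheory.Measure UnitAddCircle} [IsProbabilityMeasure ν]
variable {f : UnitAddCircle ≃ₜ UnitAddCircle}

lemma block_aux (hf : MeasurePreserving f ν ν) (hna : ∀ x : UnitAddCircle, ν {x} = 0)
    (x : UnitAddCircle) (δ η₀ η : ℝ) (hδ0 : 0 < δ) (hδη₀ : δ < η₀) (hη₀η : η₀ < η)
    (hη₀half : η₀ < 1/2) {c : ENNReal}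
    (hcP : c ≤ ν (ball (x + (((δ + η₀)/2 : ℝ) : UnitAddCircle)) ((η₀ - δ)/2)))
    (hcM : c ≤ ν (ball (x + ((-(δ + η₀)/2 : ℝ) : UnitAddCircle)) ((η₀ - δ)/2)))
    (hc0 : c ≠ 0) (hc1 : c ≤ 1)
    (hδrec : ∀ N : ℕ, ∃ n ≥ N, dist ((⇑f.symm)^[n] x) x < δ) :
    ∀ M N₀ : ℕ, ∃ (N₁ : ℕ) (rr : ℕ → ℝ), N₀ ≤ N₁ ∧ (∀ n, 0 ≤ rr n) ∧
      (∀ n, (n < N₀ ∨ N₁ ≤ n) → rr n = 0) ∧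
      (∀ n, (⇑f)^[n] ⁻¹' ball x (rr n) ⊆ ball x η) ∧
      (M : ENNReal) * (c/2) ≤ ∑ n ∈ Finset.Ico N₀ N₁, ν (ball x (rr n)) ∧
      (0 < M → N₀ < N₁) := by
  intro M
  induction M with
  | zero =>
    intro N₀
    refine ⟨N₀, fun _ => 0, le_rfl, fun _ => le_rfl, fun _ _ => rfl, ?_, by simp, by omega⟩
    intro n
    rw [Metric.ball_eq_empty.mpr le_rfl]
    simp
  | succ M ih =>
    intro N₀
    obtain ⟨n, hnN₀, hndist⟩ := hδrec N₀
    obtain ⟨r, hr0, hrhalf, hrcont, hrmeas⟩ :=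
      per_time hf hna x δ η₀ η hδ0 hδη₀ hη₀η hη₀half hcP hcM hc0 hc1 n hndist
    obtain ⟨N₁, rr, hN₁, hrrpos, hrrsupp, hrrcont, hrrsum, _⟩ := ih (n+1)
    classical
    refine ⟨N₁, fun m => if m = n then r else rr m, by omega, ?_, ?_, ?_, ?_, by omega⟩
    · intro m
      by_cases h : m = n
      · simp [h, hr0.le]
      · simp only [if_neg h]
        exact hrrpos m
    · intro m hm
      have hmn : m ≠ n := by omega
      simp only [if_neg hmn]
      exact hrrsupp m (by omega)
    · intro m
      by_cases h : m = n
      · subst h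
        simpa using hrcont
      · simpa [if_neg h] using hrrcont m
    · have hsubset : insert n (Finset.Ico (n+1) N₁) ⊆ Finset.Ico N₀ N₁ := by
        intro m hm
        simp only [Finset.mem_insert, Finset.mem_Ico] at hm ⊢
        omega
      have hnotmem : n ∉ Finset.Ico (n+1) N₁ := by simp
      calc ((M + 1 : ℕ) : ENNReal) * (c/2) = (M : ENNReal) * (c/2) + c/2 := by
            push_cast
            ring
        _ ≤ (∑ m ∈ Finset.Ico (n+1) N₁, ν (ball x (rr m))) + ν (ball x r) := by
            gcongr
        _ = ∑ m ∈ insert n (Finset.Ico (n+1) N₁),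
              ν (ball x (if m = n then r else rr m)) := by
            rw [Finset.sum_insert hnotmem, if_pos rfl]
            rw [add_comm]
            congr 1
            apply Finset.sum_congr rfl
            intro m hm
            have : m ≠ n := by
              simp only [Finset.mem_Ico] at hm
              omega
            rw [if_neg this]
        _ ≤ ∑ m ∈ Finset.Ico N₀ N₁, ν (ball x (if m = n then r else rr m)) :=
            Finset.sum_le_sum_of_subset hsubset

lemma block (hf : MeasurePreserving f ν ν) (hna : ∀ x : UnitAddCircle, ν {x} = 0)
    (x : UnitAddCircle)
    (hrec : ∀ ε > 0, ∀ N : ℕ, ∃ n ≥ N, dist ((⇑f.symm)^[n] x) x < ε)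
    (hP : ∀ ε : ℝ, 0 < ε → ε ≤ 1/2 →
        ν (ball (x + ((1 * ε/2 : ℝ) : UnitAddCircle)) (ε/2)) ≠ 0 ∧
        ν (ball (x + ((-1 * ε/2 : ℝ) : UnitAddCircle)) (ε/2)) ≠ 0)
    (k N₀ : ℕ) :
    ∃ p : ℕ × (ℕ → ℝ), N₀ < p.1 ∧ (∀ n, 0 ≤ p.2 n) ∧
      (∀ n, (n < N₀ ∨ p.1 ≤ n) → p.2 n = 0) ∧
      (∀ n, (⇑f)^[n] ⁻¹' ball x (p.2 n) ⊆ ball x ((2⁻¹:ℝ)^(k+1))) ∧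
      1 ≤ ∑ n ∈ Finset.Ico N₀ p.1, ν (ball x (p.2 n)) := by
  set η : ℝ := (2⁻¹:ℝ)^(k+1) with hη
  have hηpos : 0 < η := by positivity
  have hηhalf : η ≤ 1/2 := by
    rw [hη, pow_succ]
    have h1 : ((2:ℝ)⁻¹)^k ≤ 1 := pow_le_one₀ (by norm_num) (by norm_num)
    nlinarith
  set η₀ : ℝ := η/2 with hη₀
  obtain ⟨δ, hδ0, hδη₀, hPpos, hMpos⟩ := level_params x hP η₀ (by positivity) (by linarith)
  set c : ENNReal := min (ν (ball (x + (((δ + η₀)/2 : ℝ) : UnitAddCircle)) ((η₀ - δ)/2)))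
    (ν (ball (x + ((-(δ + η₀)/2 : ℝ) : UnitAddCircle)) ((η₀ - δ)/2))) with hc
  have hc0 : c ≠ 0 := by
    rw [hc]
    intro h
    rcases min_eq_iff.mp h with ⟨h1, _⟩ | ⟨h1, _⟩
    · exact hPpos h1
    · exact hMpos h1
  have hc1 : c ≤ 1 := le_trans (min_le_left _ _) prob_le_one
  have hchalf : c/2 ≠ 0 := by
    simp only [ne_eq, ENNReal.div_eq_zero_iff]
    push_neg
    exact ⟨hc0, by norm_num⟩
  have hctop : c/2 ≠ ⊤ := by
    apply ne_top_of_le_ne_top (by norm_num : (1:ENNReal) ≠ ⊤)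
    exact le_trans (ENNReal.half_le_self) hc1
  obtain ⟨M, hM⟩ := ENNReal.exists_nat_gt (show (c/2)⁻¹ ≠ ⊤ from ENNReal.inv_ne_top.mpr hchalf)
  have hMpos' : 0 < M := by
    by_contra h
    push_neg at h
    interval_cases M
    rw [Nat.cast_zero] at hM
    exact (not_le.mpr hM) zero_le
  have hM1 : 1 ≤ (M : ENNReal) * (c/2) := by
    calc (1 : ENNReal) = (c/2)⁻¹ * (c/2) := (ENNReal.inv_mul_cancel hchalf hctop).symm
      _ ≤ (M : ENNReal) * (c/2) := mul_le_mul_left hM.le _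
  obtain ⟨N₁, rr, hle, hpos, hsupp, hcont, hsum, hlt⟩ :=
    block_aux hf hna x δ η₀ η hδ0 hδη₀ (by rw [hη₀]; linarith) (by rw [hη₀]; linarith)
      (min_le_left _ _) (min_le_right _ _) hc0 hc1 (hrec δ hδ0) M N₀
  exact ⟨(N₁, rr), hlt hMpos', hpos, hsupp, hcont, le_trans hM1 hsum⟩

end STPAux6

open STPAux STPAux2 STPAux3 STPAux4 STPAux5 STPAux6 Filter

/-- If `ν` is a non-atomic Borel probability measure on the circle
`𝕋¹ = ℝ/ℤ` and `f` is a `ν`-preserving homeomorphism of the circle, then there are a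
point `x` and a radius sequence `r : ℕ → ℝ≥0` with `∑_n ν(B(x, r n)) = ∞` but whose
limsup set of preimages `⋂_N ⋃_{n ≥ N} (fⁿ)⁻¹(B(x, r n))` is `ν`-null; i.e. the system
does not have the shrinking target property. -/
theorem circle_homeomorphism_not_STP (ν : Measure UnitAddCircle) [IsProbabilityMeasure ν]
    (hna : ∀ x : UnitAddCircle, ν {x} = 0)
    (f : UnitAddCircle ≃ₜ UnitAddCircle) (hf : MeasurePreserving f ν ν) :
    ∃ (x : UnitAddCircle) (r : ℕ → ℝ), (∀ n, 0 ≤ r n) ∧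
      (∑' n : ℕ, ν (ball x (r n)) = ⊤) ∧
      ν (⋂ N : ℕ, ⋃ n ≥ N, (⇑f)^[n] ⁻¹' ball x (r n)) = 0 := by
  classical
  obtain ⟨x, hrec, hP⟩ := exists_good_point hf hna
  have hblock := fun k N₀ => block hf hna x hrec hP k N₀
  set step : ℕ → ℕ → (ℕ × (ℕ → ℝ)) := fun k N₀ => (hblock k N₀).choose with hstep
  set B : ℕ → ℕ × (ℕ → ℝ) :=
    fun k => Nat.rec (step 0 0) (fun k ih => step (k+1) ih.1) k with hB
  set N : ℕ → ℕ := fun k => Nat.rec 0 (fun k _ => (B k).1) k with hN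
  have hN0 : N 0 = 0 := rfl
  have hNs : ∀ k, N (k+1) = (B k).1 := fun k => rfl
  have hspec : ∀ k, N k < N (k+1) ∧ (∀ n, 0 ≤ (B k).2 n) ∧
      (∀ n, (n < N k ∨ N (k+1) ≤ n) → (B k).2 n = 0) ∧
      (∀ n, (⇑f)^[n] ⁻¹' ball x ((B k).2 n) ⊆ ball x ((2⁻¹:ℝ)^(k+1))) ∧
      1 ≤ ∑ n ∈ Finset.Ico (N k) (N (k+1)), ν (ball x ((B k).2 n)) := by
    intro k
    cases k with
    | zero => exact (hblock 0 0).choose_spec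
    | succ k => exact (hblock (k+1) (B k).1).choose_spec
  have hNmono : StrictMono N := strictMono_nat_of_lt_succ (fun k => (hspec k).1)
  set r : ℕ → ℝ := fun n => ∑ k ∈ Finset.range (n+1), (B k).2 n with hr
  -- locating blocks
  have hloc : ∀ n : ℕ, ∃ j, N j ≤ n ∧ n < N (j+1) := by
    intro n
    have hex : ∃ j, n < N (j+1) :=
      ⟨n, lt_of_lt_of_le (Nat.lt_succ_self n) (hNmono.le_apply)⟩
    set j := Nat.find hex with hj
    refine ⟨j, ?_, Nat.find_spec hex⟩
    cases hjc : j with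
    | zero => rw [← hj, hjc] at *; exact hN0 ▸ Nat.zero_le n
    | succ j' =>
      have := Nat.find_min hex (by omega : j' < j)
      omega
  have heval : ∀ j n, N j ≤ n → n < N (j+1) → r n = (B j).2 n := by
    intro j n hjn hnj
    rw [hr]
    apply Finset.sum_eq_single_of_mem j
    · rw [Finset.mem_range]
      have : j ≤ N j := hNmono.le_apply
      omega
    · intro k _ hkj
      rcases lt_or_gt_of_ne hkj with h | h
      · exact ((hspec k).2.2.1) n (Or.inr (le_trans (hNmono.monotone h) hjn))
      · exact ((hspec k).2.2.1) n (Or.inl (lt_of_lt_of_le hnj (hNmono.monotone h)))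
  refine ⟨x, r, ?_, ?_, ?_⟩
  · intro n
    exact Finset.sum_nonneg fun k _ => (hspec k).2.1 n
  · -- divergence
    have hpart : ∀ K : ℕ, (K : ENNReal) ≤ ∑ n ∈ Finset.range (N K), ν (ball x (r n)) := by
      intro K
      induction K with
      | zero => simp
      | succ K ihK =>
        have hsplit : ∑ n ∈ Finset.range (N (K+1)), ν (ball x (r n))
            = (∑ n ∈ Finset.range (N K), ν (ball x (r n)))
              + ∑ n ∈ Finset.Ico (N K) (N (K+1)), ν (ball x (r n)) := by
          rw [Finset.range_eq_Ico, Finset.range_eq_Ico]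
          exact (Finset.sum_Ico_consecutive (fun n => ν (ball x (r n))) (Nat.zero_le _)
            (hNmono.monotone (Nat.le_succ K))).symm
        have hblocksum : 1 ≤ ∑ n ∈ Finset.Ico (N K) (N (K+1)), ν (ball x (r n)) := by
          have hcongr : ∑ n ∈ Finset.Ico (N K) (N (K+1)), ν (ball x (r n))
              = ∑ n ∈ Finset.Ico (N K) (N (K+1)), ν (ball x ((B K).2 n)) := by
            apply Finset.sum_congr rfl
            intro n hn
            rw [Finset.mem_Ico] at hn
            rw [heval K n hn.1 hn.2]
          rw [hcongr]
          exact (hspec K).2.2.2.2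
        rw [hsplit]
        push_cast
        exact add_le_add ihK hblocksum
    by_contra htop
    obtain ⟨K, hK⟩ := ENNReal.exists_nat_gt htop
    have h1 : (K : ENNReal) ≤ ∑' n : ℕ, ν (ball x (r n)) :=
      le_trans (hpart K) (ENNReal.sum_le_tsum _)
    exact absurd (lt_of_le_of_lt h1 hK) (lt_irrefl _)
  · -- null limsup
    apply measure_mono_null ?_ (hna x)
    intro y hy
    simp only [Set.mem_iInter, Set.mem_iUnion] at hy
    have hdy : ∀ K : ℕ, dist y x < (2⁻¹:ℝ)^(K+1) := by
      intro K
      obtain ⟨n, hn, hyn⟩ := hy (N (K+1))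
      obtain ⟨j, hj1, hj2⟩ := hloc n
      have hKj : K + 1 ≤ j := by
        by_contra h
        push_neg at h
        have hle : j + 1 ≤ K + 1 := by omega
        have hNN : N (j+1) ≤ N (K+1) := hNmono.monotone hle
        omega
      have hyn' : y ∈ (⇑f)^[n] ⁻¹' ball x ((B j).2 n) := by
        rwa [heval j n hj1 hj2] at hyn
      have := (hspec j).2.2.2.1 n hyn'
      rw [mem_ball] at this
      calc dist y x < (2⁻¹:ℝ)^(j+1) := this
        _ ≤ (2⁻¹:ℝ)^(K+1) :=
          pow_le_pow_of_le_one (by norm_num) (by norm_num) (by omega)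
    have hd0 : dist y x ≤ 0 := by
      by_contra h
      push_neg at h
      obtain ⟨K, hK⟩ := exists_pow_lt_of_lt_one h (by norm_num : (2⁻¹:ℝ) < 1)
      have h2 : (2⁻¹:ℝ)^(K+1) ≤ (2⁻¹:ℝ)^K :=
        pow_le_pow_of_le_one (by norm_num) (by norm_num) (by omega)
      linarith [hdy K]
    simp only [Set.mem_singleton_iff]
    exact eq_of_dist_eq_zero (le_antisymm hd0 dist_nonneg)
end

section
/- Let M be a complete, separable metric space, let ν be a non-atomic Borel probability measure on M, and let f : M → M be a bijective isometry that preserves ν. Then there exist a point x ∈ M and a radius sequence r : ℕ → ℝ_{≥0} such that ∑_{n=0}^∞ ν(B(x, r(n))) = ∞ and yet ν( ⋂_{N ∈ ℕ} ⋃_{n ≥ N} (fⁿ)⁻¹( B(x, r(n)) ) ) = 0. In particular, the dynamical system (M, ν, ℕ, f) does not have the shrinking target property. -/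
open MeasureTheory Metric Filter
open scoped ENNReal

/-- If `M` is a complete, separable metric space, `ν` is a non-atomic Borel
probability measure on `M`, and `f : M → M` is a `ν`-preserving bijective isometry, then
there are a point `x` and a radius sequence `r : ℕ → ℝ≥0` with `∑_n ν(B(x, r n)) = ∞`
but whose limsup set of preimages `⋂_N ⋃_{n ≥ N} (fⁿ)⁻¹(B(x, r n))` is `ν`-null; i.e.
the system does not have the shrinking target property. -/
theorem isometry_not_STP {M : Type*} [MetricSpace M] [CompleteSpace M]
    [TopologicalSpace.SeparableSpace M] [MeasurableSpace M] [BorelSpace M]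
    (ν : Measure M) [IsProbabilityMeasure ν] (hna : ∀ x : M, ν {x} = 0)
    (f : M → M) (hbij : Function.Bijective f) (hiso : Isometry f)
    (hf : MeasurePreserving f ν ν) :
    ∃ (x : M) (r : ℕ → ℝ), (∀ n, 0 ≤ r n) ∧
      (∑' n : ℕ, ν (ball x (r n)) = ⊤) ∧
      ν (⋂ N : ℕ, ⋃ n ≥ N, f^[n] ⁻¹' ball x (r n)) = 0 := by
  have hSC : SecondCountableTopology M :=
    UniformSpace.secondCountable_of_separable M
  have hisoN : ∀ n, Isometry (f^[n]) := by
    intro n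
    induction n with
    | zero => simpa using isometry_id
    | succ n ih => rw [Function.iterate_succ]; exact ih.comp hiso
  have hcons : Conservative f ν := hf.conservative
  have hrec := hcons.ae_frequently_mem_of_mem_nhds
  -- the set of points with a null ball around them is null
  set S : Set M := {x | ∃ ε > 0, ν (ball x ε) = 0} with hSdef
  have hS : ν S = 0 := by
    apply measure_null_of_locally_null
    rintro x ⟨ε, hε, hb⟩
    exact ⟨ball x ε, mem_nhdsWithin_of_mem_nhds (ball_mem_nhds x hε), hb⟩
  have hS' : ∀ᵐ x ∂ν, x ∉ S := by
    rw [ae_iff]; simpa using hS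
  obtain ⟨x, hx1, hx2⟩ := (hS'.and hrec).exists
  -- radii
  set ε : ℕ → ℝ := fun j => (j + 1 : ℝ)⁻¹ with hεdef
  have hεpos : ∀ j, 0 < ε j := fun j => by positivity
  have hεanti : ∀ {i j : ℕ}, i ≤ j → ε j ≤ ε i := by
    intro i j hij
    apply inv_anti₀ (by positivity)
    exact_mod_cast by omega
  set a : ℕ → ℝ≥0∞ := fun j => ν (ball x (ε j)) with hadef
  have hapos : ∀ j, 0 < a j := by
    intro j
    rcases eq_or_ne (a j) 0 with h | h
    · exact absurd ⟨ε j, hεpos j, h⟩ hx1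
    · exact h.bot_lt
  have hatop : ∀ j, a j ≠ ⊤ := fun j => (measure_lt_top ν _).ne
  -- block lengths
  have hK : ∀ j, ∃ K : ℕ, 1 ≤ K ∧ 1 ≤ (K : ℝ≥0∞) * a j := by
    intro j
    obtain ⟨N, hN⟩ := ENNReal.exists_nat_gt (ENNReal.inv_ne_top.2 (hapos j).ne')
    refine ⟨N + 1, by omega, ?_⟩
    calc (1 : ℝ≥0∞) = (a j)⁻¹ * a j := (ENNReal.inv_mul_cancel (hapos j).ne' (hatop j)).symm
      _ ≤ ((N + 1 : ℕ) : ℝ≥0∞) * a j := by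
          gcongr
          exact le_of_lt (hN.trans_le (by exact_mod_cast Nat.le_succ N))
  choose K hK1 hKa using hK
  set C : ℕ → ℕ := fun j => ∑ i ∈ Finset.range j, K i with hCdef
  have hCmono : StrictMono C := by
    apply strictMono_nat_of_lt_succ
    intro j
    simp only [hCdef, Finset.sum_range_succ]
    have := hK1 j; omega
  have hCle : ∀ m, m ≤ C m := by
    intro m
    calc m = ∑ i ∈ Finset.range m, 1 := by simp
      _ ≤ C m := Finset.sum_le_sum fun i _ => hK1 i
  -- block index
  have hbex : ∀ k : ℕ, ∃ j, k < C (j + 1) := fun k => ⟨k, lt_of_lt_of_le k.lt_succ_self (hCle _)⟩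
  set b : ℕ → ℕ := fun k => Nat.find (hbex k) with hbdef
  have hb_spec : ∀ k, k < C (b k + 1) := fun k => Nat.find_spec (hbex k)
  have hb_ge : ∀ j k, C j ≤ k → j ≤ b k := by
    intro j k hjk
    by_contra h
    push_neg at h
    have : C (b k + 1) ≤ C j := hCmono.monotone (by omega)
    exact absurd (hb_spec k) (by omega)
  have hb_eq : ∀ j k, C j ≤ k → k < C (j + 1) → b k = j :=
    fun j k h1 h2 => le_antisymm (Nat.find_le h2) (hb_ge j k h1)
  -- recurrence times
  have hclose : ∀ j m : ℕ, ∃ n, m ≤ n ∧ dist (f^[n] x) x < ε j := by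
    intro j m
    have : ∃ᶠ n in atTop, f^[n] x ∈ ball x (ε j) := hx2 _ (ball_mem_nhds x (hεpos j))
    obtain ⟨n, hn, hn'⟩ := (frequently_atTop.1 this) m
    exact ⟨n, hn, by simpa [mem_ball] using hn'⟩
  choose g hg1 hg2 using hclose
  set t : ℕ → ℕ := fun k => Nat.rec (g (b 0) 0) (fun k ih => g (b (k + 1)) (ih + 1)) k with htdef
  have ht_succ : ∀ k, t (k + 1) = g (b (k + 1)) (t k + 1) := fun k => rfl
  have ht_mono : StrictMono t := by
    apply strictMono_nat_of_lt_succ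
    intro k
    have := hg1 (b (k + 1)) (t k + 1)
    rw [ht_succ]; omega
  have ht_d : ∀ k, dist (f^[t k] x) x < ε (b k) := by
    intro k
    cases k with
    | zero => exact hg2 (b 0) 0
    | succ k => rw [ht_succ]; exact hg2 (b (k + 1)) (t k + 1)
  classical
  -- the radius sequence
  set r : ℕ → ℝ := fun n => if h : ∃ k, t k = n then ε (b h.choose) else 0 with hrdef
  have hrt : ∀ k, r (t k) = ε (b k) := by
    intro k
    have h : ∃ k', t k' = t k := ⟨k, rfl⟩
    have : h.choose = k := ht_mono.injective h.choose_spec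
    simp only [hrdef, dif_pos h, this]
  have hr0 : ∀ n, (¬∃ k, t k = n) → r n = 0 := by
    intro n h; simp only [hrdef, dif_neg h]
  refine ⟨x, r, ?_, ?_, ?_⟩
  · intro n
    by_cases h : ∃ k, t k = n
    · simp only [hrdef, dif_pos h]; exact (hεpos _).le
    · simp [hr0 n h]
  · -- divergence
    have h1 : ∑' k, a (b k) ≤ ∑' n, ν (ball x (r n)) :=
      calc ∑' k, a (b k) = ∑' k, ν (ball x (r (t k))) := tsum_congr fun k => by rw [hrt k]
        _ ≤ ∑' n, ν (ball x (r n)) :=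
            ENNReal.tsum_comp_le_tsum_of_injective ht_mono.injective _
    have h2 : ∑' k, a (b k) = ⊤ := by
      have key : ∀ m : ℕ, (m : ℝ≥0∞) ≤ ∑ k ∈ Finset.range (C m), a (b k) := by
        intro m
        induction m with
        | zero => simp
        | succ m ih =>
          have hsplit : Finset.range (C (m + 1)) =
              Finset.range (C m) ∪ Finset.Ico (C m) (C (m + 1)) := by
            rw [Finset.range_eq_Ico, Finset.range_eq_Ico,
              Finset.Ico_union_Ico_eq_Ico (Nat.zero_le _) (hCmono.monotone (Nat.le_add_right m 1))]
          rw [hsplit, Finset.sum_union (by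
            rw [Finset.range_eq_Ico]
            exact Finset.Ico_disjoint_Ico_consecutive _ _ _)]
          have hblock : ∑ k ∈ Finset.Ico (C m) (C (m + 1)), a (b k) = (K m : ℝ≥0∞) * a m := by
            have hc : ∀ k ∈ Finset.Ico (C m) (C (m + 1)), a (b k) = a m := by
              intro k hk
              rw [Finset.mem_Ico] at hk
              rw [hb_eq m k hk.1 hk.2]
            rw [Finset.sum_congr rfl hc, Finset.sum_const, Nat.card_Ico, nsmul_eq_mul]
            have hCK : C (m + 1) - C m = K m := by
              simp only [hCdef, Finset.sum_range_succ]
              omega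
            rw [hCK]
          rw [hblock]
          push_cast
          exact add_le_add ih (hKa m)
      have : ∀ m : ℕ, (m : ℝ≥0∞) ≤ ∑' k, a (b k) :=
        fun m => (key m).trans (ENNReal.sum_le_tsum _)
      rw [eq_top_iff, ← ENNReal.iSup_natCast]
      exact iSup_le this
    rw [eq_top_iff, ← h2]
    exact h1
  · -- null limsup
    have hsub : (⋂ N : ℕ, ⋃ n ≥ N, f^[n] ⁻¹' ball x (r n)) ⊆ {x} := by
      intro z hz
      simp only [Set.mem_iInter, Set.mem_iUnion] at hz
      have hd : ∀ j : ℕ, dist z x < 2 * ε j := by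
        intro j
        obtain ⟨n, hn, hzn⟩ := hz (t (C j))
        by_cases h : ∃ k, t k = n
        · obtain ⟨k, rfl⟩ := h
          have hkj : j ≤ b k := hb_ge j k ((ht_mono.le_iff_le).1 hn)
          have h1 : dist (f^[t k] z) x < r (t k) := by simpa [mem_ball] using hzn
          have h2 : dist z x = dist (f^[t k] z) (f^[t k] x) := ((hisoN (t k)).dist_eq z x).symm
          have h3 : dist z x < ε (b k) + ε (b k) := by
            rw [h2]
            calc dist (f^[t k] z) (f^[t k] x) ≤ dist (f^[t k] z) x + dist x (f^[t k] x) :=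
              dist_triangle _ _ _
            _ < ε (b k) + ε (b k) := by
                rw [dist_comm x]
                exact add_lt_add (by rwa [hrt k] at h1) (ht_d k)
          have : ε (b k) ≤ ε j := hεanti hkj
          linarith
        · rw [hr0 n h] at hzn
          simp [ball_eq_empty.2 (le_refl 0)] at hzn
      have : dist z x ≤ 0 := by
        by_contra h
        push_neg at h
        obtain ⟨j, hj⟩ := exists_nat_gt (2 / dist z x)
        have h2 : 2 * ε j < dist z x := by
          rw [hεdef]
          have hj1 : 2 / dist z x < (j : ℝ) + 1 := hj.trans (by linarith)
          rw [div_lt_iff₀ h] at hj1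
          have : (0:ℝ) < (j:ℝ) + 1 := by positivity
          calc 2 * ((j:ℝ)+1)⁻¹ = 2 / ((j:ℝ)+1) := by ring
            _ < dist z x := by rw [div_lt_iff₀ this]; linarith [mul_comm ((j:ℝ)+1) (dist z x)]
        exact absurd (hd j) (by linarith)
      have : z = x := by
        rw [← dist_le_zero]; exact this
      simp [this]
    exact measure_mono_null hsub (hna x)
end

section
/- Let ν be a non-zero, non-atomic, finite Borel measure on the circle 𝕋¹ = ℝ/ℤ, let f : 𝕋¹ → 𝕋¹ be a ν-preserving homeomorphism, and let x ∈ supp(ν). Then there exists a strictly increasing sequence (n_k)_{k ∈ ℕ} of natural numbers such that for every sequence (ρ_k)_{k ∈ ℕ} of nonnegative reals with ρ_k → 0 as k → ∞, one has ν( ⋂_{l ∈ ℕ} ⋃_{k ≥ l} (f^{n_k})⁻¹( B(x, ρ_k) ) ) = 0. -/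
open MeasureTheory Metric Filter
open scoped ENNReal NNReal

/-- The topological support of a measure on the circle: the set of points all of whose
open neighborhoods have positive measure. -/
def measureSupport (ν : Measure UnitAddCircle) : Set UnitAddCircle :=
  {x | ∀ U : Set UnitAddCircle, IsOpen U → x ∈ U → 0 < ν U}

namespace SubseqNullAux

open Set

/-- The canonical representative in `[0,1)` of a point of the circle. -/
noncomputable def ell (z : UnitAddCircle) : ℝ := (AddCircle.equivIco 1 0 z : ℝ)

lemma ell_mem (z : UnitAddCircle) : ell z ∈ Set.Ico (0:ℝ) 1 := by
  simpa [ell] using (AddCircle.equivIco 1 0 z).2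

lemma coe_ell (z : UnitAddCircle) : ((ell z : ℝ) : UnitAddCircle) = z := by
  conv_rhs => rw [← (AddCircle.equivIco 1 0).symm_apply_apply z]
  rfl

lemma ell_coe {s : ℝ} (hs : s ∈ Set.Ico (0:ℝ) 1) : ell (s : UnitAddCircle) = s := by
  show ((AddCircle.equivIco 1 0 (s : UnitAddCircle)) : ℝ) = s
  rw [AddCircle.equivIco, QuotientAddGroup.equivIcoMod_coe]
  exact (toIcoMod_eq_self _).mpr (by simpa using hs)

lemma coe_sub_int (r : ℝ) (n : ℤ) :
    (((r - n : ℝ)) : UnitAddCircle) = (r : UnitAddCircle) := by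
  rw [sub_eq_add_neg, QuotientAddGroup.mk_add]
  simp [QuotientAddGroup.eq_zero_iff]

/-- The parametrization of the circle around a base point `x`. -/
noncomputable def emb (x : UnitAddCircle) (r : ℝ) : UnitAddCircle := x + (r : UnitAddCircle)

/-- The relative position (in `[0,1)`) of `w` with respect to `x`. -/
noncomputable def pos (x w : UnitAddCircle) : ℝ := ell (w - x)

lemma pos_mem (x w : UnitAddCircle) : pos x w ∈ Set.Ico (0:ℝ) 1 := ell_mem _

lemma emb_pos (x w : UnitAddCircle) : emb x (pos x w) = w := by
  rw [emb, pos, coe_ell, add_sub_cancel]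

lemma pos_emb (x : UnitAddCircle) {r : ℝ} (hr : r ∈ Set.Ico (0:ℝ) 1) : pos x (emb x r) = r := by
  rw [pos, emb, add_sub_cancel_left, ell_coe hr]

lemma emb_zero (x : UnitAddCircle) : emb x 0 = x := by
  have h : ((0:ℝ) : UnitAddCircle) = 0 := by norm_cast
  rw [emb, h, add_zero]

lemma pos_self (x : UnitAddCircle) : pos x x = 0 := by
  have := pos_emb x (r := 0) ⟨le_refl 0, one_pos⟩
  rwa [emb_zero] at this

lemma emb_sub_one (x : UnitAddCircle) (r : ℝ) : emb x (r - 1) = emb x r := by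
  rw [emb, emb]
  congr 1
  exact_mod_cast coe_sub_int r 1

lemma pos_eq_zero {x z : UnitAddCircle} (h : pos x z = 0) : z = x := by
  rw [← emb_pos x z, h, emb_zero]

lemma continuous_emb (x : UnitAddCircle) : Continuous (emb x) :=
  continuous_const.add continuous_quotient_mk'

lemma isOpenMap_emb (x : UnitAddCircle) : IsOpenMap (emb x) := by
  have h1 : IsOpenMap ((↑) : ℝ → UnitAddCircle) := QuotientAddGroup.isOpenMap_coe
  have h2 : IsOpenMap (fun z : UnitAddCircle => x + z) := (Homeomorph.addLeft x).isOpenMap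
  exact h2.comp h1

lemma mem_emb_Ioo {x w : UnitAddCircle} {s t : ℝ} (hs : 0 ≤ s) (ht : t ≤ 1) :
    w ∈ emb x '' Set.Ioo s t ↔ pos x w ∈ Set.Ioo s t := by
  constructor
  · rintro ⟨r, hr, rfl⟩
    rwa [pos_emb x ⟨hs.trans hr.1.le, hr.2.trans_le ht⟩]
  · intro h
    exact ⟨pos x w, h, emb_pos x w⟩

lemma mem_emb_wrap {x w : UnitAddCircle} {s t : ℝ} (hs0 : 0 ≤ s) (hs1 : s ≤ 1)
    (ht0 : 0 ≤ t) (ht1 : t < 1) :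
    w ∈ emb x '' Set.Ioo (t - 1) s ↔ (pos x w < s ∨ t < pos x w) := by
  constructor
  · rintro ⟨r, hr, rfl⟩
    rcases le_or_gt 0 r with h0 | h0
    · left
      rw [pos_emb x ⟨h0, hr.2.trans_le hs1⟩]
      exact hr.2
    · right
      have he : emb x r = emb x (r + 1) := by
        have h := emb_sub_one x (r + 1)
        simpa using h
      rw [he, pos_emb x ⟨by linarith [hr.1], by linarith⟩]
      linarith [hr.1]
  · rintro (h | h)
    · exact ⟨pos x w, ⟨by linarith [(pos_mem x w).1], h⟩, emb_pos x w⟩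
    · refine ⟨pos x w - 1, ⟨by linarith, by linarith [(pos_mem x w).2]⟩, ?_⟩
      rw [emb_sub_one, emb_pos]

/-- Admissible connecting sets. -/
def Adm (a b : UnitAddCircle) (K : Set UnitAddCircle) : Prop :=
  IsCompact K ∧ IsPreconnected K ∧ a ∈ K ∧ b ∈ K

/-- The "connection pseudo-distance" associated to the measure `ν`. -/
noncomputable def Dm (ν : Measure UnitAddCircle) (a b : UnitAddCircle) : ℝ≥0∞ :=
  ⨅ (K : Set UnitAddCircle) (_ : Adm a b K), ν K

lemma Dm_le {ν : Measure UnitAddCircle} {a b : UnitAddCircle} {K : Set UnitAddCircle}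
    (hK : Adm a b K) : Dm ν a b ≤ ν K :=
  iInf₂_le K hK

lemma Dm_hom_le {ν : Measure UnitAddCircle} (g : UnitAddCircle ≃ₜ UnitAddCircle)
    (hg : MeasurePreserving g ν ν) (a b : UnitAddCircle) :
    Dm ν (g a) (g b) ≤ Dm ν a b := by
  refine le_iInf₂ fun K hK => ?_
  have hmeas : MeasurableSet (⇑g '' K) := (hK.1.image g.continuous).isClosed.measurableSet
  have him : ν (⇑g '' K) = ν K := by
    have h := hg.measure_preimage hmeas.nullMeasurableSet
    rw [Set.preimage_image_eq K g.injective] at h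
    exact h.symm
  exact le_trans (Dm_le ⟨hK.1.image g.continuous, hK.2.1.image _ g.continuous.continuousOn,
    Set.mem_image_of_mem _ hK.2.2.1, Set.mem_image_of_mem _ hK.2.2.2⟩) (le_of_eq him)

lemma Dm_hom {ν : Measure UnitAddCircle} (g : UnitAddCircle ≃ₜ UnitAddCircle)
    (hg : MeasurePreserving g ν ν) (a b : UnitAddCircle) :
    Dm ν (g a) (g b) = Dm ν a b := by
  refine le_antisymm (Dm_hom_le g hg a b) ?_
  have h1 : MeasurePreserving (⇑g.toMeasurableEquiv) ν ν := by
    rw [Homeomorph.toMeasurableEquiv_coe]; exact hg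
  have h2 : MeasurePreserving (⇑g.toMeasurableEquiv.symm) ν ν :=
    MeasurePreserving.symm _ h1
  have h3 : MeasurePreserving (⇑g.symm) ν ν := by
    rwa [Homeomorph.toMeasurableEquiv_symm_coe] at h2
  have := Dm_hom_le g.symm h3 (g a) (g b)
  simpa using this

lemma Dm_iterate {ν : Measure UnitAddCircle} {f : UnitAddCircle ≃ₜ UnitAddCircle}
    (hf : MeasurePreserving f ν ν) (n : ℕ) (a b : UnitAddCircle) :
    Dm ν ((⇑f)^[n] a) ((⇑f)^[n] b) = Dm ν a b := by
  induction n with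
  | zero => simp
  | succ n ih =>
    rw [Function.iterate_succ_apply', Function.iterate_succ_apply', Dm_hom f hf, ih]

lemma Dm_triangle (ν : Measure UnitAddCircle) (a b c : UnitAddCircle) :
    Dm ν a c ≤ Dm ν a b + Dm ν b c := by
  refine ENNReal.le_of_forall_pos_le_add fun ε hε hfin => ?_
  have hab : Dm ν a b ≠ ∞ := (lt_of_le_of_lt le_self_add hfin).ne
  have hbc : Dm ν b c ≠ ∞ := (lt_of_le_of_lt le_add_self hfin).ne
  have hε2 : ((ε : ℝ≥0∞)/2) ≠ 0 :=
    (ENNReal.half_pos (by exact_mod_cast hε.ne')).ne'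
  have h1 : Dm ν a b < Dm ν a b + (ε : ℝ≥0∞)/2 := ENNReal.lt_add_right hab hε2
  have h2 : Dm ν b c < Dm ν b c + (ε : ℝ≥0∞)/2 := ENNReal.lt_add_right hbc hε2
  rw [Dm, iInf_lt_iff] at h1 h2
  obtain ⟨K₁, h1⟩ := h1
  rw [iInf_lt_iff] at h1
  obtain ⟨hK₁, h1⟩ := h1
  obtain ⟨K₂, h2⟩ := h2
  rw [iInf_lt_iff] at h2
  obtain ⟨hK₂, h2⟩ := h2
  calc Dm ν a c ≤ ν (K₁ ∪ K₂) := by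
        refine Dm_le ⟨hK₁.1.union hK₂.1,
          IsPreconnected.union b hK₁.2.2.2 hK₂.2.2.1 hK₁.2.1 hK₂.2.1,
          Set.mem_union_left _ hK₁.2.2.1, Set.mem_union_right _ hK₂.2.2.2⟩
    _ ≤ ν K₁ + ν K₂ := measure_union_le _ _
    _ ≤ (Dm ν a b + (ε : ℝ≥0∞)/2) + (Dm ν b c + (ε : ℝ≥0∞)/2) := add_le_add h1.le h2.le
    _ = Dm ν a b + Dm ν b c + (ε : ℝ≥0∞) := by
        rw [add_add_add_comm, ENNReal.add_halves]

lemma arc_subset {x z : UnitAddCircle} (hz : z ≠ x) {K : Set UnitAddCircle}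
    (hK : Adm z x K) :
    emb x '' Set.Ioo 0 (pos x z) ⊆ K ∨ emb x '' Set.Ioo (pos x z) 1 ⊆ K := by
  by_contra hcon
  push_neg at hcon
  obtain ⟨u, hu, huK⟩ := Set.not_subset.mp hcon.1
  obtain ⟨v, hv, hvK⟩ := Set.not_subset.mp hcon.2
  have hqz1 : pos x z < 1 := (pos_mem x z).2
  have hqz0 : 0 < pos x z :=
    lt_of_le_of_ne (pos_mem x z).1 (fun h => hz (pos_eq_zero h.symm))
  rw [mem_emb_Ioo (le_refl 0) hqz1.le] at hu
  rw [mem_emb_Ioo hqz0.le (le_refl 1)] at hv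
  have hqu0 : 0 < pos x u := hu.1
  have hquz : pos x u < pos x z := hu.2
  have hqzv : pos x z < pos x v := hv.1
  have hqv1 : pos x v < 1 := hv.2
  set W₁ := emb x '' Set.Ioo (pos x u) (pos x v) with hW₁
  set W₂ := emb x '' Set.Ioo (pos x v - 1) (pos x u) with hW₂
  have hW₁o : IsOpen W₁ := (isOpenMap_emb x) _ isOpen_Ioo
  have hW₂o : IsOpen W₂ := (isOpenMap_emb x) _ isOpen_Ioo
  have hmem1 : ∀ w, w ∈ W₁ ↔ pos x w ∈ Set.Ioo (pos x u) (pos x v) :=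
    fun w => mem_emb_Ioo hqu0.le hqv1.le
  have hmem2 : ∀ w, w ∈ W₂ ↔ (pos x w < pos x u ∨ pos x v < pos x w) :=
    fun w => mem_emb_wrap hqu0.le (by linarith) (by linarith) hqv1
  have hcover : K ⊆ W₁ ∪ W₂ := by
    intro w hw
    have hwu : pos x w ≠ pos x u := by
      intro h
      exact huK (by rw [← emb_pos x u, ← h, emb_pos]; exact hw)
    have hwv : pos x w ≠ pos x v := by
      intro h
      exact hvK (by rw [← emb_pos x v, ← h, emb_pos]; exact hw)
    rcases lt_trichotomy (pos x w) (pos x u) with h | h | h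
    · exact Or.inr ((hmem2 w).mpr (Or.inl h))
    · exact absurd h hwu
    · rcases lt_trichotomy (pos x w) (pos x v) with h' | h' | h'
      · exact Or.inl ((hmem1 w).mpr ⟨h, h'⟩)
      · exact absurd h' hwv
      · exact Or.inr ((hmem2 w).mpr (Or.inr h'))
  have hzW₁ : z ∈ W₁ := (hmem1 z).mpr ⟨hquz, hqzv⟩
  have hxW₂ : x ∈ W₂ := (hmem2 x).mpr (Or.inl (by rw [pos_self]; exact hqu0))
  obtain ⟨w, hwK, hw12⟩ := hK.2.1 W₁ W₂ hW₁o hW₂o hcover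
    ⟨z, hK.2.2.1, hzW₁⟩ ⟨x, hK.2.2.2, hxW₂⟩
  have h1 := (hmem1 w).mp hw12.1
  have h2 := (hmem2 w).mp hw12.2
  rcases h2 with h2 | h2
  · exact absurd h1.1 (not_lt.mpr h2.le)
  · exact absurd h1.2 (not_lt.mpr h2.le)

lemma min_le_Dm {ν : Measure UnitAddCircle} {x z : UnitAddCircle} (hz : z ≠ x) :
    min (ν (emb x '' Set.Ioo 0 (pos x z))) (ν (emb x '' Set.Ioo (pos x z) 1)) ≤ Dm ν z x := by
  refine le_iInf₂ fun K hK => ?_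
  rcases arc_subset hz hK with h | h
  · exact le_trans (min_le_left _ _) (measure_mono h)
  · exact le_trans (min_le_right _ _) (measure_mono h)

/-- Small compact connected neighborhoods. -/
noncomputable def Cs (y : UnitAddCircle) (r : ℝ) : Set UnitAddCircle :=
  emb y '' Set.Icc (-r) r

lemma Cs_compact {y : UnitAddCircle} {r : ℝ} : IsCompact (Cs y r) :=
  isCompact_Icc.image (continuous_emb y)

lemma Cs_preconn {y : UnitAddCircle} {r : ℝ} : IsPreconnected (Cs y r) :=
  isPreconnected_Icc.image _ (continuous_emb y).continuousOn

lemma mem_Cs_self (y : UnitAddCircle) {r : ℝ} (h : 0 ≤ r) : y ∈ Cs y r :=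
  ⟨0, ⟨neg_nonpos.mpr h, h⟩, emb_zero y⟩

lemma Cs_mono {y : UnitAddCircle} {r r' : ℝ} (h : r ≤ r') : Cs y r ⊆ Cs y r' :=
  Set.image_mono (Set.Icc_subset_Icc (neg_le_neg h) h)

lemma mem_Cs_of_dist {y z : UnitAddCircle} {r : ℝ} (h : dist z y ≤ r) : z ∈ Cs y r := by
  set s₀ := ell (z - y) with hs₀
  have h1 : ((s₀ : ℝ) : UnitAddCircle) = z - y := coe_ell _
  set s := s₀ - round s₀ with hs
  have hcs : ((s : ℝ) : UnitAddCircle) = z - y := by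
    rw [hs, coe_sub_int s₀ (round s₀), h1]
  have habs : |s| = dist z y := by
    rw [dist_eq_norm, ← h1, AddCircle.norm_eq]
    simp
    rfl
  refine ⟨s, ?_, ?_⟩
  · rw [← habs] at h
    exact abs_le.mp h
  · rw [emb, hcs, add_sub_cancel]

lemma dist_le_of_mem_Cs {y w : UnitAddCircle} {r : ℝ} (hw : w ∈ Cs y r) : dist w y ≤ |r| := by
  obtain ⟨s, hs, rfl⟩ := hw
  have h1 : emb y s - y = ((s : ℝ) : UnitAddCircle) := by rw [emb, add_sub_cancel_left]
  rw [dist_eq_norm, h1, AddCircle.norm_eq]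
  simp only [inv_one, one_mul, mul_one]
  calc |s - round s| ≤ |s - (0 : ℤ)| := round_le s 0
    _ = |s| := by norm_num
    _ ≤ |r| := le_trans (abs_le.mpr ⟨hs.1, hs.2⟩) (le_abs_self r)

lemma iInter_Cs (y : UnitAddCircle) :
    (⋂ n : ℕ, Cs y (1/(n+1))) = {y} := by
  apply Set.Subset.antisymm
  · intro w hw
    simp only [Set.mem_iInter] at hw
    have hd : ∀ n : ℕ, dist w y ≤ 1/(n+1) := by
      intro n
      have := dist_le_of_mem_Cs (hw n)
      rwa [abs_of_pos (by positivity)] at this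
    have h0 : dist w y ≤ 0 :=
      ge_of_tendsto' tendsto_one_div_add_atTop_nhds_zero_nat hd
    have : dist w y = 0 := le_antisymm h0 dist_nonneg
    simp [eq_of_dist_eq_zero this]
  · intro w hw
    simp only [Set.mem_singleton_iff] at hw
    subst hw
    exact Set.mem_iInter.mpr fun n => mem_Cs_self w (by positivity)

lemma tendsto_Cs (ν : Measure UnitAddCircle) [IsFiniteMeasure ν]
    (hna : ∀ y : UnitAddCircle, ν {y} = 0) (y : UnitAddCircle) :
    Tendsto (fun n : ℕ => ν (Cs y (1/(n+1)))) atTop (nhds 0) := by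
  have h := tendsto_measure_iInter_atTop (μ := ν) (s := fun n : ℕ => Cs y (1/(n+1)))
    (fun n => Cs_compact.isClosed.measurableSet.nullMeasurableSet)
    (fun m n hmn => Cs_mono (by
      have hm : (0:ℝ) < m + 1 := by positivity
      have hn : (0:ℝ) < n + 1 := by positivity
      rw [div_le_div_iff₀ hn hm]
      have : (m : ℝ) ≤ n := by exact_mod_cast hmn
      linarith))
    ⟨0, measure_ne_top ν _⟩
  rw [iInter_Cs, hna y] at h
  exact h

lemma exists_V (ν : Measure UnitAddCircle) [IsFiniteMeasure ν]
    (hna : ∀ y : UnitAddCircle, ν {y} = 0) (x : UnitAddCircle) {ε : ℝ≥0∞} (hε : 0 < ε) :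
    ∃ V : Set UnitAddCircle, MeasurableSet V ∧ ν V ≤ ε + ε ∧
      ∀ z : UnitAddCircle, Dm ν z x ≤ ε → z ∈ V := by
  set Sg := {t : ℝ | t ∈ Set.Icc (0:ℝ) 1 ∧ ν (emb x '' Set.Ioo 0 t) ≤ ε} with hSg
  have h0g : (0:ℝ) ∈ Sg := ⟨⟨le_refl 0, zero_le_one⟩, by simp⟩
  have hbg : BddAbove Sg := BddAbove.mono (fun t ht => ht.1) bddAbove_Icc
  set σ := sSup Sg with hσ
  have hσmem : σ ∈ Set.Icc (0:ℝ) 1 :=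
    ⟨le_csSup hbg h0g, csSup_le ⟨0, h0g⟩ fun t ht => ht.1.2⟩
  have hgσ : ν (emb x '' Set.Ioo 0 σ) ≤ ε := by
    obtain ⟨w, hwm, hwt, hws⟩ := exists_seq_tendsto_sSup ⟨0, h0g⟩ hbg
    have hsub : emb x '' Set.Ioo 0 σ ⊆ ⋃ n : ℕ, emb x '' Set.Ioo 0 (w n) := by
      rintro _ ⟨r, hr, rfl⟩
      have hex : ∃ n, r < w n := by
        by_contra hc
        push_neg at hc
        exact absurd hr.2 (not_lt.mpr (le_of_tendsto hwt (Eventually.of_forall hc)))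
      obtain ⟨n, hn⟩ := hex
      exact Set.mem_iUnion.mpr ⟨n, ⟨r, ⟨hr.1, hn⟩, rfl⟩⟩
    have hdir : Directed (· ⊆ ·) (fun n : ℕ => emb x '' Set.Ioo 0 (w n)) :=
      (Monotone.directed_le fun m n h =>
        Set.image_mono (Set.Ioo_subset_Ioo_right (hwm h)))
    calc ν (emb x '' Set.Ioo 0 σ) ≤ ν (⋃ n : ℕ, emb x '' Set.Ioo 0 (w n)) :=
          measure_mono hsub
      _ = ⨆ n : ℕ, ν (emb x '' Set.Ioo 0 (w n)) := Directed.measure_iUnion hdir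
      _ ≤ ε := iSup_le fun n => (hws n).2
  set Sh := {t : ℝ | t ∈ Set.Icc (0:ℝ) 1 ∧ ν (emb x '' Set.Ioo t 1) ≤ ε} with hSh
  have h1h : (1:ℝ) ∈ Sh := ⟨⟨zero_le_one, le_refl 1⟩, by simp⟩
  have hbh : BddBelow Sh := BddBelow.mono (fun t ht => ht.1) bddBelow_Icc
  set τ := sInf Sh with hτ
  have hτmem : τ ∈ Set.Icc (0:ℝ) 1 :=
    ⟨le_csInf ⟨1, h1h⟩ fun t ht => ht.1.1, csInf_le hbh h1h⟩
  have hhτ : ν (emb x '' Set.Ioo τ 1) ≤ ε := by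
    obtain ⟨w, hwm, hwt, hws⟩ := exists_seq_tendsto_sInf ⟨1, h1h⟩ hbh
    have hsub : emb x '' Set.Ioo τ 1 ⊆ ⋃ n : ℕ, emb x '' Set.Ioo (w n) 1 := by
      rintro _ ⟨r, hr, rfl⟩
      have hex : ∃ n, w n < r := by
        by_contra hc
        push_neg at hc
        exact absurd hr.1 (not_lt.mpr (ge_of_tendsto hwt (Eventually.of_forall hc)))
      obtain ⟨n, hn⟩ := hex
      exact Set.mem_iUnion.mpr ⟨n, ⟨r, ⟨hn, hr.2⟩, rfl⟩⟩
    have hdir : Directed (· ⊆ ·) (fun n : ℕ => emb x '' Set.Ioo (w n) 1) :=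
      (Monotone.directed_le fun m n h =>
        Set.image_mono (Set.Ioo_subset_Ioo_left (hwm h)))
    calc ν (emb x '' Set.Ioo τ 1) ≤ ν (⋃ n : ℕ, emb x '' Set.Ioo (w n) 1) :=
          measure_mono hsub
      _ = ⨆ n : ℕ, ν (emb x '' Set.Ioo (w n) 1) := Directed.measure_iUnion hdir
      _ ≤ ε := iSup_le fun n => (hws n).2
  refine ⟨(emb x '' Set.Ioo 0 σ ∪ emb x '' Set.Ioo τ 1) ∪
    ({emb x σ} ∪ {emb x τ} ∪ {x}), ?_, ?_, ?_⟩
  · refine MeasurableSet.union (MeasurableSet.union ?_ ?_)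
      (MeasurableSet.union (MeasurableSet.union ?_ ?_) ?_)
    · exact ((isOpenMap_emb x) _ isOpen_Ioo).measurableSet
    · exact ((isOpenMap_emb x) _ isOpen_Ioo).measurableSet
    · exact measurableSet_singleton _
    · exact measurableSet_singleton _
    · exact measurableSet_singleton _
  · have hsing : ν ({emb x σ} ∪ {emb x τ} ∪ {x}) = 0 :=
      measure_union_null (measure_union_null (hna _) (hna _)) (hna _)
    calc ν _ ≤ ν (emb x '' Set.Ioo 0 σ ∪ emb x '' Set.Ioo τ 1) +
          ν ({emb x σ} ∪ {emb x τ} ∪ {x}) := measure_union_le _ _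
      _ = ν (emb x '' Set.Ioo 0 σ ∪ emb x '' Set.Ioo τ 1) := by rw [hsing, add_zero]
      _ ≤ ν (emb x '' Set.Ioo 0 σ) + ν (emb x '' Set.Ioo τ 1) := measure_union_le _ _
      _ ≤ ε + ε := add_le_add hgσ hhτ
  · intro z hDm
    rcases eq_or_ne z x with rfl | hz
    · exact Or.inr (Or.inr rfl)
    · have hmin := le_trans (min_le_Dm hz) hDm
      have hq0 : 0 < pos x z :=
        lt_of_le_of_ne (pos_mem x z).1 (fun h => hz (pos_eq_zero h.symm))
      rcases min_le_iff.mp hmin with hP | hN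
      · have hmem : pos x z ∈ Sg := ⟨⟨(pos_mem x z).1, (pos_mem x z).2.le⟩, hP⟩
        have hle : pos x z ≤ σ := le_csSup hbg hmem
        rcases lt_or_eq_of_le hle with h | h
        · exact Or.inl (Or.inl ⟨pos x z, ⟨hq0, h⟩, emb_pos x z⟩)
        · refine Or.inr (Or.inl (Or.inl ?_))
          rw [← emb_pos x z, h]
          rfl
      · have hmem : pos x z ∈ Sh := ⟨⟨(pos_mem x z).1, (pos_mem x z).2.le⟩, hN⟩
        have hge : τ ≤ pos x z := csInf_le hbh hmem
        rcases lt_or_eq_of_le hge with h | h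
        · exact Or.inl (Or.inr ⟨pos x z, ⟨h, (pos_mem x z).2⟩, emb_pos x z⟩)
        · refine Or.inr (Or.inl (Or.inr ?_))
          rw [← emb_pos x z, ← h]
          rfl

end SubseqNullAux

open SubseqNullAux

/-- Let `ν` be a non-zero, non-atomic, finite Borel measure on `𝕋¹ = ℝ/ℤ`,
`f` a `ν`-preserving homeomorphism and `x ∈ supp(ν)`. Then there is a strictly
increasing sequence `(n_k)` of natural numbers such that for every sequence `(ρ_k)` of
nonnegative reals tending to `0`, the set `⋂_l ⋃_{k ≥ l} (f^{n_k})⁻¹(B(x, ρ_k))` is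
`ν`-null. -/
theorem subsequence_with_null_limsup (ν : Measure UnitAddCircle) [IsFiniteMeasure ν]
    (hne : ν ≠ 0) (hna : ∀ y : UnitAddCircle, ν {y} = 0)
    (f : UnitAddCircle ≃ₜ UnitAddCircle) (hf : MeasurePreserving f ν ν)
    (x : UnitAddCircle) (hx : x ∈ measureSupport ν) :
    ∃ nk : ℕ → ℕ, StrictMono nk ∧
      ∀ ρ : ℕ → ℝ, (∀ k, 0 ≤ ρ k) → Tendsto ρ atTop (nhds 0) →
        ν (⋂ l : ℕ, ⋃ k ≥ l, (⇑f)^[nk k] ⁻¹' ball x (ρ k)) = 0 := by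
  classical
  obtain ⟨u, hu⟩ := TopologicalSpace.exists_dense_seq UnitAddCircle
  obtain ⟨L, φ, hφ, hconv⟩ :=
    CompactSpace.tendsto_subseq (fun n => (fun i : ℕ => (⇑f)^[n] (u i)))
  have hconv' : ∀ i : ℕ, Tendsto (fun k => (⇑f)^[φ k] (u i)) atTop (nhds (L i)) :=
    fun i => tendsto_pi_nhds.mp hconv i
  refine ⟨φ, hφ, ?_⟩
  intro ρ hρ0 hρ
  -- Cauchy-type estimate along the subsequence.
  have cauchy : ∀ y : UnitAddCircle, ∀ δ : ℝ≥0∞, 0 < δ →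
      ∃ N : ℕ, ∀ k ≥ N, ∀ l ≥ N, Dm ν ((⇑f)^[φ k] y) ((⇑f)^[φ l] y) ≤ δ := by
    intro y δ hδ
    have hδ4 : 0 < δ/2/2 := ENNReal.half_pos (ENNReal.half_pos hδ.ne').ne'
    obtain ⟨i, hi1, hi2⟩ : ∃ i, Dm ν y (u i) ≤ δ/2/2 ∧ Dm ν (u i) y ≤ δ/2/2 := by
      obtain ⟨n, hn⟩ : ∃ n : ℕ, ν (Cs y (1/(n+1))) ≤ δ/2/2 :=
        ((tendsto_Cs ν hna y).eventually_le_const hδ4).exists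
      obtain ⟨i, hi⟩ := hu.exists_mem_open
        ((isOpenMap_emb y) _ isOpen_Ioo :
          IsOpen (emb y '' Set.Ioo (-(1/(n+1))) (1/(n+1))))
        ⟨y, ⟨0, ⟨neg_lt_zero.mpr (by positivity), by positivity⟩, emb_zero y⟩⟩
      have hui : u i ∈ Cs y (1/(n+1)) :=
        Set.image_mono Set.Ioo_subset_Icc_self hi
      have hy : y ∈ Cs y (1/(n+1)) := mem_Cs_self y (by positivity)
      exact ⟨i, le_trans (Dm_le ⟨Cs_compact, Cs_preconn, hy, hui⟩) hn,
        le_trans (Dm_le ⟨Cs_compact, Cs_preconn, hui, hy⟩) hn⟩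
    obtain ⟨n, hn⟩ : ∃ n : ℕ, ν (Cs (L i) (1/(n+1))) ≤ δ/2/2 :=
      ((tendsto_Cs ν hna (L i)).eventually_le_const hδ4).exists
    obtain ⟨N, hN⟩ := Metric.tendsto_atTop.mp (hconv' i) (1/(n+1)) (by positivity)
    refine ⟨N, fun k hk l hl => ?_⟩
    have hk' : (⇑f)^[φ k] (u i) ∈ Cs (L i) (1/(n+1)) := mem_Cs_of_dist (hN k hk).le
    have hl' : (⇑f)^[φ l] (u i) ∈ Cs (L i) (1/(n+1)) := mem_Cs_of_dist (hN l hl).le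
    have hLi : L i ∈ Cs (L i) (1/(n+1)) := mem_Cs_self _ (by positivity)
    have hmid : Dm ν ((⇑f)^[φ k] (u i)) ((⇑f)^[φ l] (u i)) ≤ δ/2/2 + δ/2/2 := by
      refine le_trans (Dm_triangle ν _ (L i) _) (add_le_add ?_ ?_)
      · exact le_trans (Dm_le ⟨Cs_compact, Cs_preconn, hk', hLi⟩) hn
      · exact le_trans (Dm_le ⟨Cs_compact, Cs_preconn, hLi, hl'⟩) hn
    calc Dm ν ((⇑f)^[φ k] y) ((⇑f)^[φ l] y)
        ≤ Dm ν ((⇑f)^[φ k] y) ((⇑f)^[φ l] (u i)) +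
            Dm ν ((⇑f)^[φ l] (u i)) ((⇑f)^[φ l] y) := Dm_triangle ν _ _ _
      _ ≤ (Dm ν ((⇑f)^[φ k] y) ((⇑f)^[φ k] (u i)) +
            Dm ν ((⇑f)^[φ k] (u i)) ((⇑f)^[φ l] (u i))) +
            Dm ν ((⇑f)^[φ l] (u i)) ((⇑f)^[φ l] y) :=
          add_le_add_left (Dm_triangle ν _ _ _) _
      _ = (Dm ν y (u i) + Dm ν ((⇑f)^[φ k] (u i)) ((⇑f)^[φ l] (u i))) + Dm ν (u i) y := by
          rw [Dm_iterate hf, Dm_iterate hf]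
      _ ≤ (δ/2/2 + (δ/2/2 + δ/2/2)) + δ/2/2 :=
          add_le_add (add_le_add hi1 hmid) hi2
      _ = δ := by
          rw [ENNReal.add_halves (δ/2)]
          rw [add_comm (δ/2/2) (δ/2), add_assoc, ENNReal.add_halves (δ/2)]
          rw [add_comm, ENNReal.add_halves]
  -- Main ε-bound.
  have main : ∀ ε : ℝ≥0∞, 0 < ε →
      ν (⋂ l : ℕ, ⋃ k ≥ l, (⇑f)^[φ k] ⁻¹' ball x (ρ k)) ≤ ε + ε := by
    intro ε hε
    obtain ⟨V, hVm, hVν, hVmem⟩ := exists_V ν hna x hε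
    have hε2 : (0:ℝ≥0∞) < ε/2 := ENNReal.half_pos hε.ne'
    have hsub : (⋂ l : ℕ, ⋃ k ≥ l, (⇑f)^[φ k] ⁻¹' ball x (ρ k)) ⊆
        ⋃ m : ℕ, ⋂ k, ⋂ (_ : k ≥ m), (⇑f)^[φ k] ⁻¹' V := by
      intro y hy
      simp only [Set.mem_iInter, Set.mem_iUnion] at hy ⊢
      obtain ⟨n₀, hn₀⟩ : ∃ n : ℕ, ν (Cs x (1/(n+1))) ≤ ε/2 :=
        ((tendsto_Cs ν hna x).eventually_le_const hε2).exists
      obtain ⟨k₀, hk₀⟩ : ∃ k₀ : ℕ, ∀ k ≥ k₀, ρ k < 1/(n₀+1) :=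
        eventually_atTop.mp (hρ.eventually_lt_const (by positivity))
      obtain ⟨N, hN⟩ := cauchy y (ε/2) hε2
      obtain ⟨k₂, hk₂ge, hk₂⟩ := hy (max N k₀)
      refine ⟨N, fun k hk => ?_⟩
      have h1 : Dm ν ((⇑f)^[φ k₂] y) x ≤ ε/2 := by
        have hmem : (⇑f)^[φ k₂] y ∈ Cs x (ρ k₂) :=
          mem_Cs_of_dist (le_of_lt (show dist ((⇑f)^[φ k₂] y) x < ρ k₂ from hk₂))
        have hd : Dm ν ((⇑f)^[φ k₂] y) x ≤ ν (Cs x (ρ k₂)) :=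
          Dm_le ⟨Cs_compact, Cs_preconn, hmem, mem_Cs_self x (hρ0 k₂)⟩
        refine le_trans hd (le_trans (measure_mono (Cs_mono ?_)) hn₀)
        exact (hk₀ k₂ (le_trans (le_max_right _ _) hk₂ge)).le
      have h2 : Dm ν ((⇑f)^[φ k] y) ((⇑f)^[φ k₂] y) ≤ ε/2 :=
        hN k hk k₂ (le_trans (le_max_left _ _) hk₂ge)
      have h3 : Dm ν ((⇑f)^[φ k] y) x ≤ ε := by
        refine le_trans (Dm_triangle ν _ ((⇑f)^[φ k₂] y) _) ?_
        calc Dm ν ((⇑f)^[φ k] y) ((⇑f)^[φ k₂] y) + Dm ν ((⇑f)^[φ k₂] y) x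
            ≤ ε/2 + ε/2 := add_le_add h2 h1
          _ = ε := ENNReal.add_halves ε
      exact hVmem _ h3
    have hW : ν (⋃ m : ℕ, ⋂ k, ⋂ (_ : k ≥ m), (⇑f)^[φ k] ⁻¹' V) ≤ ε + ε := by
      have hmono : Monotone (fun m : ℕ => ⋂ k, ⋂ (_ : k ≥ m), (⇑f)^[φ k] ⁻¹' V) := by
        intro m m' hmm' y hy
        simp only [Set.mem_iInter] at hy ⊢
        exact fun k hk => hy k (le_trans hmm' hk)
      rw [Directed.measure_iUnion hmono.directed_le]
      refine iSup_le fun m => ?_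
      have h1 : (⋂ k, ⋂ (_ : k ≥ m), (⇑f)^[φ k] ⁻¹' V) ⊆ (⇑f)^[φ m] ⁻¹' V := by
        intro y hy
        simp only [Set.mem_iInter] at hy
        exact hy m (le_refl m)
      calc ν (⋂ k, ⋂ (_ : k ≥ m), (⇑f)^[φ k] ⁻¹' V) ≤ ν ((⇑f)^[φ m] ⁻¹' V) :=
            measure_mono h1
        _ = ν V := (hf.iterate (φ m)).measure_preimage hVm.nullMeasurableSet
        _ ≤ ε + ε := hVν
    exact le_trans (measure_mono hsub) hW
  -- Conclusion.
  refine le_antisymm ?_ (zero_le (a := _))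
  refine ENNReal.le_of_forall_pos_le_add fun ε hε _ => ?_
  have hε' : (0:ℝ≥0∞) < (ε : ℝ≥0∞)/2/2 :=
    ENNReal.half_pos (ENNReal.half_pos (by exact_mod_cast hε.ne')).ne'
  have h := main ((ε : ℝ≥0∞)/2/2) hε'
  calc ν (⋂ l : ℕ, ⋃ k ≥ l, (⇑f)^[φ k] ⁻¹' ball x (ρ k))
      ≤ (ε : ℝ≥0∞)/2/2 + (ε : ℝ≥0∞)/2/2 := h
    _ = (ε : ℝ≥0∞)/2 := ENNReal.add_halves _
    _ ≤ 0 + (ε : ℝ≥0∞) := by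
        rw [zero_add]
        exact ENNReal.half_le_self
end
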